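/- arXiv:2107.04637 — 4 statements merged into one kernel-verified Lean document; each statement's English description precedes it below -/
import Mathlib

section
/- Let α > −1 and W(x,y) = x^α y^{α+1} e^{−x−y}/(x+y) for x, y > 0. Let (p_k)_{k≥0} and (q_k)_{k≥0} be monic polynomials with deg p_k = deg q_k = k satisfying ∫_0^∞∫_0^∞ p_k(x) q_l(y) W(x,y) dx dy = h_k δ_{kl} with h_k ≠ 0. Write p_k(x) = Σ_{i=0}^k a_{k,i} x^i and q_k(y) = Σ_{i=0}^k â_{k,i} y^i, define b_{β,0} = 1, b_{β,i} = −Σ_{j=0}^{i−1} b_{β,j} a_{β−j,β−i} for i ≥ 1, and b̂_{β,0} = 1, b̂_{β,i} = −Σ_{j=0}^{i−1} b̂_{β,j} â_{β−j,β−i} for i ≥ 1, with the convention b_{β,i} = b̂_{β,i} = 0 for i < 0. Then for all β, k, j ∈ ℕ: (1/h_j)∫_0^∞∫_0^∞ x^β p_k(x) q_j(y) W(x,y) dx dy = Σ_{ℓ=0}^{k} a_{k,ℓ} b_{β+ℓ, β+ℓ−j}, and (1/h_j)∫_0^∞∫_0^∞ y^β p_j(x) q_k(y) W(x,y) dx dy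 = Σ_{ℓ=0}^{k} â_{k,ℓ} b̂_{β+ℓ, β+ℓ−j}. -/
open MeasureTheory Real

/-- The Cauchy-Laguerre weight `W(x,y) = x^α y^{α+1} e^{-x-y}/(x+y)`. -/
noncomputable def Wcl (α : ℝ) (x y : ℝ) : ℝ :=
  x ^ α * y ^ (α + 1) * Real.exp (-x - y) / (x + y)

/-- `b_{β,0} = 1`, `b_{β,i} = -Σ_{j=0}^{i-1} b_{β,j} a_{β-j,β-i}`. -/
noncomputable def bcoef (a : ℕ → ℕ → ℝ) (β : ℕ) : ℕ → ℝ
  | 0 => 1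
  | (i + 1) => -∑ j : Fin (i + 1), bcoef a β j * a (β - (j : ℕ)) (β - (i + 1))

/-- `b_{β,i}` extended to integer second index, with `b_{β,i} = 0` for `i < 0`. -/
noncomputable def bcoefZ (a : ℕ → ℕ → ℝ) (β : ℕ) (i : ℤ) : ℝ :=
  if 0 ≤ i then bcoef a β i.toNat else 0

noncomputable def Gfun (α : ℝ) (Q : Polynomial ℝ) (x : ℝ) : ℝ :=
  ∫ y in Set.Ioi (0:ℝ), Q.eval y * Wcl α x y

lemma wcl_meas (α : ℝ) : Measurable (fun p : ℝ × ℝ => Wcl α p.1 p.2) := by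
  unfold Wcl
  fun_prop

lemma L1 (α : ℝ) (hα : -1 < α) (P : Polynomial ℝ) :
    IntegrableOn (fun t => P.eval t * (t ^ α * Real.exp (-t))) (Set.Ioi 0) := by
  induction P using Polynomial.induction_on' with
  | add p q hp hq =>
      refine IntegrableOn.congr_fun (hp.add hq) (fun t ht => ?_) measurableSet_Ioi
      simp [Polynomial.eval_add]; ring
  | monomial n c =>
      have h1 : (0:ℝ) < α + n + 1 := by
        have : (0:ℝ) ≤ n := Nat.cast_nonneg n
        linarith
      refine IntegrableOn.congr_fun ((Real.GammaIntegral_convergent h1).smul c)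
        (fun t ht => ?_) measurableSet_Ioi
      have ht' : (0:ℝ) < t := ht
      simp only [Pi.smul_apply, smul_eq_mul, Polynomial.eval_monomial]
      rw [show α + ↑n + 1 - 1 = α + n by ring, Real.rpow_add ht', Real.rpow_natCast]
      ring

lemma L1abs (α : ℝ) (hα : -1 < α) (P : Polynomial ℝ) :
    IntegrableOn (fun t => |P.eval t| * (t ^ α * Real.exp (-t))) (Set.Ioi 0) := by
  refine IntegrableOn.congr_fun (L1 α hα P).abs (fun t ht => ?_) measurableSet_Ioi
  have ht' : (0:ℝ) < t := ht
  rw [abs_mul, abs_of_nonneg (by positivity : (0:ℝ) ≤ t ^ α * Real.exp (-t))]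

lemma wcl_nonneg (α : ℝ) {x y : ℝ} (hx : 0 < x) (hy : 0 < y) : 0 ≤ Wcl α x y := by
  unfold Wcl; positivity

lemma L0 (α : ℝ) {x y : ℝ} (hx : 0 < x) (hy : 0 < y) (Q : Polynomial ℝ) :
    |Q.eval y * Wcl α x y| ≤ |Q.eval y| * (y ^ α * Real.exp (-y)) * (x ^ α * Real.exp (-x)) := by
  rw [abs_mul, abs_of_nonneg (wcl_nonneg α hx hy)]
  have key : Wcl α x y = (x ^ α * Real.exp (-x)) * (y ^ α * Real.exp (-y)) * (y / (x + y)) := by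
    unfold Wcl
    rw [show -x - y = -x + -y by ring, Real.exp_add, Real.rpow_add_one hy.ne' α]
    field_simp
  rw [key]
  have h1 : y / (x + y) ≤ 1 := by
    rw [div_le_one (by linarith)]; linarith
  calc |Q.eval y| * ((x ^ α * Real.exp (-x)) * (y ^ α * Real.exp (-y)) * (y / (x + y)))
      ≤ |Q.eval y| * ((x ^ α * Real.exp (-x)) * (y ^ α * Real.exp (-y)) * 1) := by
        gcongr
    _ = |Q.eval y| * (y ^ α * Real.exp (-y)) * (x ^ α * Real.exp (-x)) := by ring

lemma L4 (α : ℝ) (hα : -1 < α) (Q : Polynomial ℝ) {x : ℝ} (hx : 0 < x) :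
    IntegrableOn (fun y => Q.eval y * Wcl α x y) (Set.Ioi 0) := by
  refine Integrable.mono' (((L1abs α hα Q).mul_const (x ^ α * Real.exp (-x)))) ?_ ?_
  · apply Measurable.aestronglyMeasurable
    have := (wcl_meas α).comp (measurable_const.prodMk measurable_id : Measurable fun y : ℝ => (x, y))
    exact (Q.continuous_aeval.measurable).mul this
  · filter_upwards [ae_restrict_mem measurableSet_Ioi] with y hy
    exact L0 α hx hy Q

lemma GSM (α : ℝ) (Q : Polynomial ℝ) : StronglyMeasurable (Gfun α Q) := by
  have : StronglyMeasurable (fun p : ℝ × ℝ => Q.eval p.2 * Wcl α p.1 p.2) :=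
    ((Q.continuous_aeval.measurable.comp measurable_snd).mul (wcl_meas α)).stronglyMeasurable
  exact this.integral_prod_right'

lemma L5 (α : ℝ) (hα : -1 < α) (Q : Polynomial ℝ) {x : ℝ} (hx : 0 < x) :
    |Gfun α Q x| ≤ (∫ y in Set.Ioi (0:ℝ), |Q.eval y| * (y ^ α * Real.exp (-y))) * (x ^ α * Real.exp (-x)) := by
  have h1 : |Gfun α Q x| ≤ ∫ y in Set.Ioi (0:ℝ), |Q.eval y * Wcl α x y| := by
    unfold Gfun
    simpa only [Real.norm_eq_abs] using
      MeasureTheory.norm_integral_le_integral_norm (μ := volume.restrict (Set.Ioi 0))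
        (fun y => Q.eval y * Wcl α x y)
  refine h1.trans ?_
  rw [← integral_mul_const]
  refine integral_mono_of_nonneg ?_ (((L1abs α hα Q).mul_const _)) ?_
  · filter_upwards with y; positivity
  · filter_upwards [ae_restrict_mem measurableSet_Ioi] with y hy
    exact L0 α hx hy Q

lemma L6 (α : ℝ) (hα : -1 < α) (P Q : Polynomial ℝ) :
    IntegrableOn (fun x => P.eval x * Gfun α Q x) (Set.Ioi 0) := by
  set C := ∫ y in Set.Ioi (0:ℝ), |Q.eval y| * (y ^ α * Real.exp (-y)) with hC
  refine Integrable.mono' (((L1abs α hα P).mul_const C)) ?_ ?_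
  · exact ((P.continuous_aeval.measurable.stronglyMeasurable).mul (GSM α Q)).aestronglyMeasurable
  · filter_upwards [ae_restrict_mem measurableSet_Ioi] with x hx
    have hx' : (0:ℝ) < x := hx
    have hb := L5 α hα Q hx'
    calc ‖P.eval x * Gfun α Q x‖ = |P.eval x| * |Gfun α Q x| := by
          rw [Real.norm_eq_abs, abs_mul]
      _ ≤ |P.eval x| * (C * (x ^ α * Real.exp (-x))) := by
          gcongr
      _ = |P.eval x| * (x ^ α * Real.exp (-x)) * C := by ring

/-- Expansion of `X^β` in the monic basis. -/
lemma expandX (p : ℕ → Polynomial ℝ) (hpm : ∀ k, (p k).Monic)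
    (hpd : ∀ k, (p k).natDegree = k) (β : ℕ) :
    (Polynomial.X : Polynomial ℝ) ^ β =
      ∑ i ∈ Finset.range (β + 1),
        Polynomial.C (bcoef (fun k' i => (p k').coeff i) β i) * p (β - i) := by
  set a : ℕ → ℕ → ℝ := fun k' i => (p k').coeff i with ha
  set b : ℕ → ℝ := bcoef a β with hb
  ext m
  rw [Polynomial.finset_sum_coeff]
  simp only [Polynomial.coeff_C_mul, Polynomial.coeff_X_pow]
  have hcoeff_top : ∀ i, i ≤ β → (p (β - i)).coeff (β - i) = 1 := fun i hi => by
    have := (hpm (β - i)).coeff_natDegree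
    rwa [hpd] at this
  have hcoeff_hi : ∀ i m : ℕ, β - i < m → (p (β - i)).coeff m = 0 := fun i m hm =>
    Polynomial.coeff_eq_zero_of_natDegree_lt (by rw [hpd]; exact hm)
  by_cases hm : β < m
  · rw [if_neg (by omega)]
    rw [Finset.sum_eq_zero]
    intro i hi
    rw [hcoeff_hi i m (by omega), mul_zero]
  push_neg at hm
  -- m ≤ β; let i0 = β - m
  set i0 := β - m with hi0
  clear_value i0
  have hsub : Finset.range (i0 + 1) ⊆ Finset.range (β + 1) := by
    apply Finset.range_subset_range.2; omega
  rw [← Finset.sum_subset hsub (fun i hi hni => by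
    rw [hcoeff_hi i m (by simp at hi hni ⊢; omega), mul_zero])]
  rw [Finset.sum_range_succ]
  have : (p (β - i0)).coeff m = 1 := by
    have h1 : β - i0 = m := by omega
    rw [h1]
    have := (hpm m).coeff_natDegree
    rwa [hpd] at this
  rw [this, mul_one]
  have hterm : ∀ i ∈ Finset.range i0, b i * (p (β - i)).coeff m = b i * a (β - i) (β - i0) := by
    intro i hi
    congr 1
    simp only [ha]
    congr 1
    omega
  rw [Finset.sum_congr rfl hterm]
  by_cases h0 : i0 = 0
  · subst h0
    simp only [Finset.range_zero, Finset.sum_empty, zero_add]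
    rw [if_pos (by omega), hb]
    simp [bcoef]
  · obtain ⟨i', rfl⟩ := Nat.exists_eq_succ_of_ne_zero h0
    rw [if_neg (by omega)]
    have hrec : b (i' + 1) = -∑ j : Fin (i' + 1), b j * a (β - (j : ℕ)) (β - (i' + 1)) := by
      rw [hb]; simp [bcoef]
    rw [hrec, ← Finset.sum_range (fun j => b j * a (β - j) (β - (i' + 1)))]
    ring

/-- Inner sum evaluation. -/
lemma innerSum (a : ℕ → ℕ → ℝ) (h : ℕ → ℝ) (n j : ℕ) :
    ∑ i ∈ Finset.range (n + 1), bcoef a n i * (if n - i = j then h j else 0)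
      = h j * bcoefZ a n ((n : ℤ) - j) := by
  by_cases hj : j ≤ n
  · rw [Finset.sum_eq_single_of_mem (n - j) (Finset.mem_range.2 (by omega))]
    · rw [if_pos (by omega)]
      unfold bcoefZ
      rw [if_pos (by omega)]
      have : ((n : ℤ) - j).toNat = n - j := by omega
      rw [this]; ring
    · intro i hi hne
      rw [if_neg (by simp at hi; omega), mul_zero]
  · rw [Finset.sum_eq_zero, eq_comm]
    · unfold bcoefZ
      rw [if_neg (by omega), mul_zero]
    · intro i hi
      rw [if_neg (by simp at hi; omega), mul_zero]

lemma polyexp (p : ℕ → Polynomial ℝ) (hpm : ∀ k, (p k).Monic)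
    (hpd : ∀ k, (p k).natDegree = k) (β k : ℕ) :
    (Polynomial.X : Polynomial ℝ) ^ β * p k =
      ∑ ℓ ∈ Finset.range (k + 1), ∑ i ∈ Finset.range (β + ℓ + 1),
        Polynomial.C ((p k).coeff ℓ * bcoef (fun k' i => (p k').coeff i) (β + ℓ) i)
          * p (β + ℓ - i) := by
  conv_lhs => rw [Polynomial.as_sum_range' (p k) (k + 1) (by rw [hpd]; omega)]
  rw [Finset.mul_sum]
  refine Finset.sum_congr rfl fun ℓ hℓ => ?_
  rw [← Polynomial.C_mul_X_pow_eq_monomial]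
  have : (Polynomial.X : Polynomial ℝ) ^ β * (Polynomial.C ((p k).coeff ℓ) * Polynomial.X ^ ℓ)
      = Polynomial.C ((p k).coeff ℓ) * Polynomial.X ^ (β + ℓ) := by
    rw [pow_add]; ring
  rw [this, expandX p hpm hpd (β + ℓ), Finset.mul_sum]
  refine Finset.sum_congr rfl fun i hi => ?_
  rw [← mul_assoc, ← Polynomial.C_mul]

lemma L6' (α : ℝ) (hα : -1 < α) (c : ℝ) (P Q : Polynomial ℝ) :
    IntegrableOn (fun x => c * P.eval x * Gfun α Q x) (Set.Ioi 0) := by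
  refine IntegrableOn.congr_fun ((L6 α hα P Q).const_mul c) (fun x _ => by ring) measurableSet_Ioi

lemma Gfun_sum {ι : Type*} (α : ℝ) (hα : -1 < α) (s : Finset ι) (Q : ι → Polynomial ℝ)
    {x : ℝ} (hx : 0 < x) :
    Gfun α (∑ m ∈ s, Q m) x = ∑ m ∈ s, Gfun α (Q m) x := by
  unfold Gfun
  rw [← integral_finset_sum s (fun m _ => L4 α hα (Q m) hx)]
  congr 1
  funext y
  rw [Polynomial.eval_finset_sum, Finset.sum_mul]

lemma Gfun_smul (α : ℝ) (hα : -1 < α) (c : ℝ) (Q : Polynomial ℝ) {x : ℝ} (hx : 0 < x) :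
    Gfun α (Polynomial.C c * Q) x = c * Gfun α Q x := by
  unfold Gfun
  rw [← integral_const_mul]
  congr 1
  funext y
  rw [Polynomial.eval_mul, Polynomial.eval_C]
  ring

theorem power_against_pq (α : ℝ) (hα : -1 < α)
    (p q : ℕ → Polynomial ℝ) (h : ℕ → ℝ)
    (hpm : ∀ k, (p k).Monic) (hpd : ∀ k, (p k).natDegree = k)
    (hqm : ∀ k, (q k).Monic) (hqd : ∀ k, (q k).natDegree = k)
    (hh : ∀ k, h k ≠ 0)
    (hbo : ∀ k l, (∫ x in Set.Ioi (0:ℝ), ∫ y in Set.Ioi (0:ℝ),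
        (p k).eval x * (q l).eval y * Wcl α x y) = if k = l then h k else 0)
    (β k j : ℕ) :
    (1 / h j) * (∫ x in Set.Ioi (0:ℝ), ∫ y in Set.Ioi (0:ℝ),
        x ^ β * (p k).eval x * (q j).eval y * Wcl α x y) =
      (∑ ℓ ∈ Finset.range (k + 1),
        (p k).coeff ℓ * bcoefZ (fun k' i => (p k').coeff i) (β + ℓ) ((β : ℤ) + ℓ - j)) ∧
    (1 / h j) * (∫ x in Set.Ioi (0:ℝ), ∫ y in Set.Ioi (0:ℝ),
        y ^ β * (p j).eval x * (q k).eval y * Wcl α x y) =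
      ∑ ℓ ∈ Finset.range (k + 1),
        (q k).coeff ℓ * bcoefZ (fun k' i => (q k').coeff i) (β + ℓ) ((β : ℤ) + ℓ - j) := by
  have hbo' : ∀ m l, (∫ x in Set.Ioi (0:ℝ), (p m).eval x * Gfun α (q l) x)
      = if m = l then h m else 0 := by
    intro m l
    rw [← hbo m l]
    refine setIntegral_congr_fun measurableSet_Ioi (fun x _ => ?_)
    unfold Gfun
    rw [← integral_const_mul]
    congr 1; funext y; ring
  constructor
  · -- Part 1
    have hpt : ∀ x : ℝ,
        (∫ y in Set.Ioi (0:ℝ), x ^ β * (p k).eval x * (q j).eval y * Wcl α x y)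
          = (Polynomial.X ^ β * p k).eval x * Gfun α (q j) x := by
      intro x
      unfold Gfun
      rw [← integral_const_mul]
      congr 1; funext y
      rw [Polynomial.eval_mul, Polynomial.eval_pow, Polynomial.eval_X]
      ring
    simp only [hpt]
    have key : (∫ x in Set.Ioi (0:ℝ), (Polynomial.X ^ β * p k).eval x * Gfun α (q j) x)
        = h j * ∑ ℓ ∈ Finset.range (k + 1),
            (p k).coeff ℓ * bcoefZ (fun k' i => (p k').coeff i) (β + ℓ) ((β : ℤ) + ℓ - j) := by
      rw [polyexp p hpm hpd β k]
      have hint : ∀ x : ℝ,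
          (∑ ℓ ∈ Finset.range (k + 1), ∑ i ∈ Finset.range (β + ℓ + 1),
            Polynomial.C ((p k).coeff ℓ * bcoef (fun k' i => (p k').coeff i) (β + ℓ) i)
              * p (β + ℓ - i)).eval x * Gfun α (q j) x
          = ∑ ℓ ∈ Finset.range (k + 1), ∑ i ∈ Finset.range (β + ℓ + 1),
              ((p k).coeff ℓ * bcoef (fun k' i => (p k').coeff i) (β + ℓ) i)
                * ((p (β + ℓ - i)).eval x * Gfun α (q j) x) := by
        intro x
        rw [Polynomial.eval_finset_sum, Finset.sum_mul]
        refine Finset.sum_congr rfl fun ℓ _ => ?_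
        rw [Polynomial.eval_finset_sum, Finset.sum_mul]
        refine Finset.sum_congr rfl fun i _ => ?_
        rw [Polynomial.eval_mul, Polynomial.eval_C]
        ring
      simp only [hint]
      rw [integral_finset_sum _ (fun ℓ _ => integrable_finset_sum _ (fun i _ =>
        ((L6 α hα (p (β + ℓ - i)) (q j)).const_mul _)))]
      have hterm : ∀ ℓ ∈ Finset.range (k + 1),
          (∫ x in Set.Ioi (0:ℝ), ∑ i ∈ Finset.range (β + ℓ + 1),
            ((p k).coeff ℓ * bcoef (fun k' i => (p k').coeff i) (β + ℓ) i)
              * ((p (β + ℓ - i)).eval x * Gfun α (q j) x))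
          = (p k).coeff ℓ * (h j * bcoefZ (fun k' i => (p k').coeff i) (β + ℓ)
              (((β + ℓ : ℕ) : ℤ) - j)) := by
        intro ℓ _
        rw [integral_finset_sum _ (fun i _ => ((L6 α hα (p (β + ℓ - i)) (q j)).const_mul _))]
        have h1 : ∀ i ∈ Finset.range (β + ℓ + 1),
            (∫ x in Set.Ioi (0:ℝ),
              ((p k).coeff ℓ * bcoef (fun k' i => (p k').coeff i) (β + ℓ) i)
                * ((p (β + ℓ - i)).eval x * Gfun α (q j) x))
            = (p k).coeff ℓ * (bcoef (fun k' i => (p k').coeff i) (β + ℓ) i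
                * (if β + ℓ - i = j then h j else 0)) := by
          intro i _
          rw [integral_const_mul, hbo']
          split_ifs with hc
          · rw [hc]; ring
          · ring
        rw [Finset.sum_congr rfl h1, ← Finset.mul_sum,
          innerSum (fun k' i => (p k').coeff i) h (β + ℓ) j]
      rw [Finset.sum_congr rfl hterm, Finset.mul_sum]
      refine Finset.sum_congr rfl fun ℓ _ => ?_
      have hcast : (((β + ℓ : ℕ) : ℤ) - j) = ((β : ℤ) + ℓ - j) := by push_cast; ring
      rw [hcast]
      ring
    rw [key, one_div, inv_mul_cancel_left₀ (hh j)]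
  · -- Part 2
    have hpt : ∀ x : ℝ,
        (∫ y in Set.Ioi (0:ℝ), y ^ β * (p j).eval x * (q k).eval y * Wcl α x y)
          = (p j).eval x * Gfun α (Polynomial.X ^ β * q k) x := by
      intro x
      unfold Gfun
      rw [← integral_const_mul]
      congr 1; funext y
      rw [Polynomial.eval_mul, Polynomial.eval_pow, Polynomial.eval_X]
      ring
    simp only [hpt]
    have key : (∫ x in Set.Ioi (0:ℝ), (p j).eval x * Gfun α (Polynomial.X ^ β * q k) x)
        = h j * ∑ ℓ ∈ Finset.range (k + 1),
            (q k).coeff ℓ * bcoefZ (fun k' i => (q k').coeff i) (β + ℓ) ((β : ℤ) + ℓ - j) := by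
      have hEq : Set.EqOn (fun x => (p j).eval x * Gfun α (Polynomial.X ^ β * q k) x)
          (fun x => ∑ ℓ ∈ Finset.range (k + 1), ∑ i ∈ Finset.range (β + ℓ + 1),
            ((q k).coeff ℓ * bcoef (fun k' i => (q k').coeff i) (β + ℓ) i)
              * ((p j).eval x * Gfun α (q (β + ℓ - i)) x)) (Set.Ioi 0) := by
        intro x hx
        have hx' : (0:ℝ) < x := hx
        simp only
        rw [polyexp q hqm hqd β k, Gfun_sum α hα _ _ hx']
        rw [Finset.mul_sum]
        refine Finset.sum_congr rfl fun ℓ _ => ?_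
        rw [Gfun_sum α hα _ _ hx', Finset.mul_sum]
        refine Finset.sum_congr rfl fun i _ => ?_
        rw [Gfun_smul α hα _ _ hx']
        ring
      rw [setIntegral_congr_fun measurableSet_Ioi hEq]
      rw [integral_finset_sum _ (fun ℓ _ => integrable_finset_sum _ (fun i _ =>
        ((L6 α hα (p j) (q (β + ℓ - i))).const_mul _)))]
      have hterm : ∀ ℓ ∈ Finset.range (k + 1),
          (∫ x in Set.Ioi (0:ℝ), ∑ i ∈ Finset.range (β + ℓ + 1),
            ((q k).coeff ℓ * bcoef (fun k' i => (q k').coeff i) (β + ℓ) i)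
              * ((p j).eval x * Gfun α (q (β + ℓ - i)) x))
          = (q k).coeff ℓ * (h j * bcoefZ (fun k' i => (q k').coeff i) (β + ℓ)
              (((β + ℓ : ℕ) : ℤ) - j)) := by
        intro ℓ _
        rw [integral_finset_sum _ (fun i _ => ((L6 α hα (p j) (q (β + ℓ - i))).const_mul _))]
        have h1 : ∀ i ∈ Finset.range (β + ℓ + 1),
            (∫ x in Set.Ioi (0:ℝ),
              ((q k).coeff ℓ * bcoef (fun k' i => (q k').coeff i) (β + ℓ) i)
                * ((p j).eval x * Gfun α (q (β + ℓ - i)) x))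
            = (q k).coeff ℓ * (bcoef (fun k' i => (q k').coeff i) (β + ℓ) i
                * (if β + ℓ - i = j then h j else 0)) := by
          intro i _
          rw [integral_const_mul, hbo']
          rcases eq_or_ne (β + ℓ - i) j with hc | hc
          · rw [if_pos hc.symm, if_pos hc]; ring
          · rw [if_neg (Ne.symm hc), if_neg hc]; ring
        rw [Finset.sum_congr rfl h1, ← Finset.mul_sum,
          innerSum (fun k' i => (q k').coeff i) h (β + ℓ) j]
      rw [Finset.sum_congr rfl hterm, Finset.mul_sum]
      refine Finset.sum_congr rfl fun ℓ _ => ?_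
      have hcast : (((β + ℓ : ℕ) : ℤ) - j) = ((β : ℤ) + ℓ - j) := by push_cast; ring
      rw [hcast]
      ring
    rw [key, one_div, inv_mul_cancel_left₀ (hh j)]
end

section
/- Let α > −1 be real. Define a_{k,j} = (−1)^{k−j} C(k,j) Γ(2α+k+j+2)Γ(2α+k+2)Γ(α+k+1) / (Γ(2α+2k+2)Γ(2α+j+2)Γ(α+j+1)) and â_{k,j} = (−1)^{k−j} C(k,j) Γ(2α+k+j+2)Γ(2α+k+2)Γ(α+k+2) / (Γ(2α+2k+2)Γ(2α+j+2)Γ(α+j+2)) for 0 ≤ j ≤ k, and define b_{k,0} = 1, b_{k,i} = −Σ_{j=0}^{i−1} b_{k,j} a_{k−j,k−i} and b̂_{k,0} = 1, b̂_{k,i} = −Σ_{j=0}^{i−1} b̂_{k,j} â_{k−j,k−i} for i ≥ 1. Then for all 0 ≤ j ≤ k one has the closed forms b_{k,j} = C(k,j) Γ(2α+k+2)Γ(α+k+1)Γ(2α+2k+3−2j) / (Γ(2α+k+2−j)Γ(α+k+1−j)Γ(2α+2k+3−j)) and b̂_{k,j} = C(k,j) Γ(2α+k+2)Γ(α+k+2)Γ(2α+2k+3−2j)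 / (Γ(2α+k+2−j)Γ(α+k+2−j)Γ(2α+2k+3−j)). -/
open MeasureTheory Real

/-- Coefficients of the monic Cauchy-Laguerre biorthogonal polynomial `p_k`. -/
noncomputable def aCL (α : ℝ) (k j : ℕ) : ℝ :=
  (-1 : ℝ) ^ (k - j) * (Nat.choose k j) *
    (Real.Gamma (2 * α + k + j + 2) * Real.Gamma (2 * α + k + 2) * Real.Gamma (α + k + 1)) /
    (Real.Gamma (2 * α + 2 * k + 2) * Real.Gamma (2 * α + j + 2) * Real.Gamma (α + j + 1))

/-- Coefficients of the monic Cauchy-Laguerre biorthogonal polynomial `q_k`. -/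
noncomputable def ahCL (α : ℝ) (k j : ℕ) : ℝ :=
  (-1 : ℝ) ^ (k - j) * (Nat.choose k j) *
    (Real.Gamma (2 * α + k + j + 2) * Real.Gamma (2 * α + k + 2) * Real.Gamma (α + k + 2)) /
    (Real.Gamma (2 * α + 2 * k + 2) * Real.Gamma (2 * α + j + 2) * Real.Gamma (α + j + 2))

noncomputable def ggCL (α β : ℝ) (k j : ℕ) : ℝ :=
  (-1 : ℝ) ^ (k - j) * (Nat.choose k j) *
    (Real.Gamma (2 * α + k + j + 2) * Real.Gamma (2 * α + k + 2) * Real.Gamma (β + k + 1)) /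
    (Real.Gamma (2 * α + 2 * k + 2) * Real.Gamma (2 * α + j + 2) * Real.Gamma (β + j + 1))

noncomputable def BBCL (α β : ℝ) (k j : ℕ) : ℝ :=
  (Nat.choose k j) * Real.Gamma (2 * α + k + 2) * Real.Gamma (β + k + 1) *
    Real.Gamma (2 * α + 2 * k + 3 - 2 * j) /
    (Real.Gamma (2 * α + k + 2 - j) * Real.Gamma (β + k + 1 - j) *
      Real.Gamma (2 * α + 2 * k + 3 - j))

lemma Gne {x : ℝ} (h : 0 < x) : Real.Gamma x ≠ 0 := (Real.Gamma_pos_of_pos h).ne'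

lemma neg_one_pow_sub {a b : ℕ} (h : a ≤ b) : ((-1:ℝ))^(b-a) = (-1)^(b+a) := by
  have h2 : b - a + 2*a = b + a := by omega
  calc ((-1:ℝ))^(b-a) = (-1)^(b-a) * ((-1)^2)^a := by norm_num
    _ = (-1)^(b-a+2*a) := by rw [← pow_mul, ← pow_add]
    _ = (-1)^(b+a) := by rw [h2]

lemma BB0 (α β : ℝ) (hα : -1 < α) (hβ : -1 < β) (k : ℕ) : BBCL α β k 0 = 1 := by
  have h1 : (0:ℝ) < 2*α + k + 2 := by
    have : (0:ℝ) ≤ k := Nat.cast_nonneg k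
    linarith
  have h2 : (0:ℝ) < β + k + 1 := by
    have : (0:ℝ) ≤ k := Nat.cast_nonneg k
    linarith
  have h3 : (0:ℝ) < 2*α + 2*k + 3 := by
    have : (0:ℝ) ≤ k := Nat.cast_nonneg k
    linarith
  unfold BBCL
  simp only [Nat.choose_zero_right, Nat.cast_zero, Nat.cast_one, mul_zero, sub_zero, one_mul]
  rw [div_self]
  exact mul_ne_zero (mul_ne_zero (Gne h1) (Gne h2)) (Gne h3)

lemma step_alg (s c2 c3 c4 c6 c7 d1 d2 d3 g1 g2 q ga gb ss t u v : ℝ)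
    (hga : ga ≠ 0) (hgb : gb ≠ 0) (hss : ss ≠ 0) (ht : t ≠ 0) (hu : u ≠ 0) (hv : v ≠ 0)
    (hd2 : d2 ≠ 0)
    (h1 : c6*c7 = c4*(c2+c3)) (h2 : c2*d1 + c3*d2 = (c2+c3)*d3) :
    s*c2*c4*(g1*g2*(d1*q))/(ga*gb*(d2*ss))
    + c6*g1*g2*(d3*t)/(u*v*(d2*ss)) * (s*(-1)*c7*(q*u*v)/(t*ga*gb))
    = s*(-1)*c3*c4*(g1*g2*q)/(ga*gb*ss) := by
  have e2 : c2*c4*d1 - c6*c7*d3 = -(c3*c4*d2) := by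
    linear_combination (-d3)*h1 + c4*h2
  have e1 : s*c2*c4*(g1*g2*(d1*q))/(ga*gb*(d2*ss))
      + c6*g1*g2*(d3*t)/(u*v*(d2*ss)) * (s*(-1)*c7*(q*u*v)/(t*ga*gb))
      = (s*g1*g2*q)/(ga*gb*ss) * ((c2*c4*d1 - c6*c7*d3)/d2) := by
    field_simp
    ring
  rw [e1, e2]
  field_simp

lemma psum (α β : ℝ) (hα : -1 < α) (hβ : -1 < β) (k m : ℕ) (hmk : m ≤ k) :
    ∀ l, l + 1 ≤ m →
    ∑ j : Fin (l+1), BBCL α β k j * ggCL α β (k - (j:ℕ)) (k - m)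
    = (-1:ℝ)^(m+l) * ((m-1).choose l) * (k.choose m) *
        (Real.Gamma (2*α+k+2) * Real.Gamma (β+k+1) * Real.Gamma (2*α+2*k+2-m-l)) /
        (Real.Gamma (2*α+k+2-m) * Real.Gamma (β+k+1-m) * Real.Gamma (2*α+2*k+2-l)) := by
  have hkm : ((k - m : ℕ) : ℝ) = (k:ℝ) - m := by
    push_cast [Nat.cast_sub hmk]; ring
  intro l
  induction l with
  | zero =>
      intro hm
      rw [Fin.sum_univ_one]
      simp only [Fin.val_zero, Nat.sub_zero]
      rw [BB0 α β hα hβ k, one_mul]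
      unfold ggCL
      rw [Nat.sub_sub_self hmk, Nat.choose_symm hmk]
      rw [show (2*α + (k:ℝ) + ((k-m:ℕ):ℝ) + 2) = 2*α + 2*k + 2 - (m:ℝ) by rw [hkm]; ring]
      rw [show (2*α + ((k-m:ℕ):ℝ) + 2) = 2*α + (k:ℝ) + 2 - m by rw [hkm]; ring]
      rw [show (β + ((k-m:ℕ):ℝ) + 1) = β + (k:ℝ) + 1 - m by rw [hkm]; ring]
      simp only [Nat.choose_zero_right, Nat.cast_one, Nat.cast_zero, sub_zero, mul_zero, add_zero]
      ring
  | succ l ih =>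
      intro hm
      have hm' : l + 1 ≤ m := by omega
      have H := ih (by omega)
      rw [Fin.sum_univ_castSucc]
      simp only [Fin.coe_castSucc, Fin.val_last]
      rw [H]
      have hckl : ((k - (l+1) : ℕ):ℝ) = (k:ℝ) - ((l:ℝ)+1) := by
        have h := Nat.cast_sub (show l+1 ≤ k by omega) (R := ℝ)
        push_cast at h ⊢; linarith
      unfold BBCL ggCL
      rw [show k - (l+1) - (k - m) = m - (l+1) by omega]
      rw [neg_one_pow_sub hm']
      rw [hckl, hkm]
      push_cast
      -- positivity facts
      have hk0 : (0:ℝ) ≤ (k:ℝ) := Nat.cast_nonneg k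
      have hl0 : (0:ℝ) ≤ (l:ℝ) := Nat.cast_nonneg l
      have hmr : (m:ℝ) ≤ (k:ℝ) := by exact_mod_cast hmk
      have hlm : (l:ℝ) + 2 ≤ (m:ℝ) := by exact_mod_cast hm
      have hQ : (2*α+2*(k:ℝ)+1-(m:ℝ)-(l:ℝ)) ≠ 0 := by
        have : (0:ℝ) < 2*α+2*(k:ℝ)+1-(m:ℝ)-(l:ℝ) := by linarith
        linarith
      have hS : (2*α+2*(k:ℝ)+1-(l:ℝ)) ≠ 0 := by
        have : (0:ℝ) < 2*α+2*(k:ℝ)+1-(l:ℝ) := by linarith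
        linarith
      have hT : (2*α+2*(k:ℝ)-2*(l:ℝ)) ≠ 0 := by
        have : (0:ℝ) < 2*α+2*(k:ℝ)-2*(l:ℝ) := by linarith
        linarith
      -- canonicalize Gamma arguments
      rw [show (2*α+2*(k:ℝ)+2-(m:ℝ)-(l:ℝ)) = (2*α+2*(k:ℝ)+1-(m:ℝ)-(l:ℝ))+1 by ring,
          Real.Gamma_add_one hQ]
      rw [show (2*α+((k:ℝ)-((l:ℝ)+1))+((k:ℝ)-(m:ℝ))+2) = (2*α+2*(k:ℝ)+1-(m:ℝ)-(l:ℝ)) by ring]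
      rw [show (2*α+2*(k:ℝ)+2-(m:ℝ)-((l:ℝ)+1)) = (2*α+2*(k:ℝ)+1-(m:ℝ)-(l:ℝ)) by ring]
      rw [show (2*α+2*(k:ℝ)+3-((l:ℝ)+1)) = (2*α+2*(k:ℝ)+1-(l:ℝ))+1 by ring]
      rw [show (2*α+2*(k:ℝ)+2-(l:ℝ)) = (2*α+2*(k:ℝ)+1-(l:ℝ))+1 by ring]
      rw [Real.Gamma_add_one hS]
      rw [show (2*α+2*(k:ℝ)+2-((l:ℝ)+1)) = (2*α+2*(k:ℝ)+1-(l:ℝ)) by ring]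
      rw [show (2*α+2*(k:ℝ)+3-2*((l:ℝ)+1)) = (2*α+2*(k:ℝ)-2*(l:ℝ))+1 by ring]
      rw [show (2*α+2*((k:ℝ)-((l:ℝ)+1))+2) = (2*α+2*(k:ℝ)-2*(l:ℝ)) by ring]
      rw [Real.Gamma_add_one hT]
      rw [show (2*α+((k:ℝ)-((l:ℝ)+1))+2) = (2*α+(k:ℝ)+2-((l:ℝ)+1)) by ring]
      rw [show (β+((k:ℝ)-((l:ℝ)+1))+1) = (β+(k:ℝ)+1-((l:ℝ)+1)) by ring]
      rw [show (2*α+((k:ℝ)-(m:ℝ))+2) = (2*α+(k:ℝ)+2-(m:ℝ)) by ring]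
      rw [show (β+((k:ℝ)-(m:ℝ))+1) = (β+(k:ℝ)+1-(m:ℝ)) by ring]
      rw [show m + (l+1) = (m+l)+1 from rfl, pow_succ]
      have hg1 : Real.Gamma (2*α+(k:ℝ)+2) ≠ 0 := Gne (by linarith)
      have hg2 : Real.Gamma (β+(k:ℝ)+1) ≠ 0 := Gne (by linarith)
      have hga : Real.Gamma (2*α+(k:ℝ)+2-(m:ℝ)) ≠ 0 := Gne (by linarith)
      have hgb : Real.Gamma (β+(k:ℝ)+1-(m:ℝ)) ≠ 0 := Gne (by linarith)
      have hgss : Real.Gamma (2*α+2*(k:ℝ)+1-(l:ℝ)) ≠ 0 := Gne (by linarith)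
      have hgt : Real.Gamma (2*α+2*(k:ℝ)-2*(l:ℝ)) ≠ 0 := Gne (by linarith)
      have hgu : Real.Gamma (2*α+(k:ℝ)+2-((l:ℝ)+1)) ≠ 0 := Gne (by linarith)
      have hgv : Real.Gamma (β+(k:ℝ)+1-((l:ℝ)+1)) ≠ 0 := Gne (by linarith)
      -- choose identities
      have hch1 : ((k.choose (l+1) : ℝ)) * (((k - (l+1)).choose (k - m) : ℝ))
          = (k.choose m : ℝ) * (((m-1).choose l : ℝ) + ((m-1).choose (l+1) : ℝ)) := by
        have e1 : (k - (l+1)).choose (k - m) = (k - (l+1)).choose (m - (l+1)) := by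
          rw [show m - (l+1) = (k - (l+1)) - (k - m) by omega]
          exact (Nat.choose_symm (by omega)).symm
        have e2 : k.choose m * m.choose (l+1)
            = k.choose (l+1) * (k - (l+1)).choose (m - (l+1)) :=
          Nat.choose_mul hm'
        have e3 : m.choose (l+1) = (m-1).choose l + (m-1).choose (l+1) := by
          rw [show m = (m-1)+1 by omega]
          simp [Nat.choose_succ_succ]
        have e2' : ((k.choose m : ℝ)) * (m.choose (l+1) : ℝ)
            = (k.choose (l+1) : ℝ) * (((k-(l+1)).choose (m-(l+1)) : ℕ) : ℝ) := by
          exact_mod_cast congrArg (Nat.cast : ℕ → ℝ) e2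
        have e3' : ((m.choose (l+1) : ℝ)) = ((m-1).choose l : ℝ) + ((m-1).choose (l+1) : ℝ) := by
          exact_mod_cast congrArg (Nat.cast : ℕ → ℝ) e3
        rw [e1]
        linear_combination ((k.choose m : ℝ))*e3' - e2'
      have hch3 : (((m-1).choose l : ℝ)) * (2*α+2*(k:ℝ)+1-(m:ℝ)-(l:ℝ))
            + (((m-1).choose (l+1) : ℝ)) * (2*α+2*(k:ℝ)+1-(l:ℝ))
          = (((m-1).choose l : ℝ) + ((m-1).choose (l+1) : ℝ)) * (2*α+2*(k:ℝ)-2*(l:ℝ)) := by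
        have e4 := Nat.choose_succ_right_eq (m-1) l
        have e5 : ((m-1) - l : ℕ) = m - 1 - l := by omega
        rw [e5] at e4
        have e6 : (((m-1).choose (l+1) : ℝ)) * ((l:ℝ)+1)
            = ((m-1).choose l : ℝ) * ((m:ℝ) - 1 - (l:ℝ)) := by
          have e7 : (((m-1).choose (l+1) : ℝ)) * ((l:ℝ)+1)
              = ((m-1).choose l : ℝ) * (((m-1-l : ℕ)):ℝ) := by
            exact_mod_cast congrArg (Nat.cast : ℕ → ℝ) e4
          rw [e7]
          congr 1
          rw [Nat.cast_sub (show l ≤ m-1 by omega), Nat.cast_sub (show 1 ≤ m by omega)]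
          push_cast
          ring
        linarith [e6]
      exact step_alg _ _ _ _ _ _ _ _ _ _ _ _ _ _ _ _ _ _ hga hgb hgss hgt hgu hgv hS hch1 hch3

lemma BB_main (α β : ℝ) (hα : -1 < α) (hβ : -1 < β) :
    ∀ j k : ℕ, j ≤ k → bcoef (ggCL α β) k j = BBCL α β k j := by
  intro j
  induction j using Nat.strong_induction_on with
  | _ j ih =>
    intro k hjk
    match j, hjk with
    | 0, hjk =>
        rw [bcoef, BB0 α β hα hβ k]
    | (i+1), hjk =>
        rw [bcoef]
        rw [show (∑ j : Fin (i+1), bcoef (ggCL α β) k j * ggCL α β (k - (j:ℕ)) (k - (i+1)))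
            = ∑ j : Fin (i+1), BBCL α β k j * ggCL α β (k - (j:ℕ)) (k - (i+1)) from
          Finset.sum_congr rfl (fun j _ => by rw [ih j (by omega) k (by omega)])]
        rw [psum α β hα hβ k (i+1) hjk i (le_refl _)]
        have hodd : ((-1:ℝ))^(i+1+i) = -1 := Odd.neg_one_pow ⟨i, by omega⟩
        rw [hodd]
        simp only [Nat.add_sub_cancel, Nat.choose_self, Nat.cast_one]
        unfold BBCL
        push_cast
        ring_nf

theorem bcoef_closed_form (α : ℝ) (hα : -1 < α) (k j : ℕ) (hjk : j ≤ k) :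
    bcoef (aCL α) k j =
      (Nat.choose k j) * Real.Gamma (2 * α + k + 2) * Real.Gamma (α + k + 1) *
        Real.Gamma (2 * α + 2 * k + 3 - 2 * j) /
        (Real.Gamma (2 * α + k + 2 - j) * Real.Gamma (α + k + 1 - j) *
          Real.Gamma (2 * α + 2 * k + 3 - j)) ∧
    bcoef (ahCL α) k j =
      (Nat.choose k j) * Real.Gamma (2 * α + k + 2) * Real.Gamma (α + k + 2) *
        Real.Gamma (2 * α + 2 * k + 3 - 2 * j) /
        (Real.Gamma (2 * α + k + 2 - j) * Real.Gamma (α + k + 2 - j) *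
          Real.Gamma (2 * α + 2 * k + 3 - j)) := by
  constructor
  · have hfun : aCL α = ggCL α α := rfl
    rw [hfun, BB_main α α hα hα j k hjk]
    unfold BBCL
    ring_nf
  · have hfun : ahCL α = ggCL α (α+1) := by
      funext k j
      unfold ahCL ggCL
      rw [show α+1+(k:ℝ)+1 = α+(k:ℝ)+2 by ring, show α+1+(j:ℝ)+1 = α+(j:ℝ)+2 by ring]
    rw [hfun, BB_main α (α+1) hα (by linarith) j k hjk]
    unfold BBCL
    rw [show α+1+(k:ℝ)+1 = α+(k:ℝ)+2 by ring]
end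

section
/- Let α > −1 be real and let k ≥ 0 and i ≥ 1 be integers with i ≤ k. Then Σ_{j=0}^{i−1} (−1)^j C(i,j) (2α+2k+2−2j) Γ(2α+2k−i−j+2) / Γ(2α+2k+3−j) = (−1)^{i−1} Γ(2α+2k+3−2i) / Γ(2α+2k+3−i). -/
open Real

theorem gamma_sum_identity (α : ℝ) (hα : -1 < α) (k i : ℕ) (hi : 1 ≤ i) (hik : i ≤ k) :
    ∑ j ∈ Finset.range i, (-1 : ℝ) ^ j * (Nat.choose i j) * (2 * α + 2 * k + 2 - 2 * j) *
        Real.Gamma (2 * α + 2 * k - i - j + 2) / Real.Gamma (2 * α + 2 * k + 3 - j) =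
      (-1 : ℝ) ^ (i - 1) * Real.Gamma (2 * α + 2 * k + 3 - 2 * i) /
        Real.Gamma (2 * α + 2 * k + 3 - i) := by
  have hik' : (i : ℝ) ≤ k := by exact_mod_cast hik
  set x : ℝ := 2 * α + 2 * k with hxdef
  have hx : 0 < x - 2 * i + 2 := by simp only [hxdef]; nlinarith
  set G : ℕ → ℝ := fun j => if j = 0 then 0 else
    (-1 : ℝ) ^ j * ((i - 1).choose (j - 1)) * Real.Gamma (x - i - j + 3) /
      Real.Gamma (x + 3 - j) with hG
  have key : ∀ j ∈ Finset.range i,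
      (-1 : ℝ) ^ j * (Nat.choose i j) * (x + 2 - 2 * j) *
        Real.Gamma (x - i - j + 2) / Real.Gamma (x + 3 - j)
      = -G (j + 1) - -G j := by
    intro j hj
    rw [Finset.mem_range] at hj
    have hji : (j : ℝ) ≤ (i : ℝ) - 1 := by
      have : (j : ℝ) + 1 ≤ i := by exact_mod_cast hj
      linarith
    have hA : 0 < x - i - j + 2 := by nlinarith [hik']
    have hB : 0 < x + 2 - j := by nlinarith [hik']
    have hΓA := Real.Gamma_pos_of_pos hA
    have hΓB := Real.Gamma_pos_of_pos hB
    have hΓA1 : Real.Gamma (x - i - j + 3) = (x - i - j + 2) * Real.Gamma (x - i - j + 2) := by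
      rw [show x - i - j + 3 = (x - i - j + 2) + 1 by ring, Real.Gamma_add_one hA.ne']
    have hΓB1 : Real.Gamma (x + 3 - j) = (x + 2 - j) * Real.Gamma (x + 2 - j) := by
      rw [show x + 3 - (j : ℝ) = (x + 2 - j) + 1 by ring, Real.Gamma_add_one hB.ne']
    rcases Nat.eq_zero_or_pos j with hj0 | hj1
    · subst hj0
      simp only [hG, if_pos rfl, if_neg (Nat.one_ne_zero)]
      push_cast at hA hB hΓA hΓB hΓA1 hΓB1 ⊢
      rw [show x - ↑i - 1 + 3 = x - ↑i - 0 + 2 by ring,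
          show x + 3 - (1:ℝ) = x + 2 - 0 by ring, hΓB1]
      simp only [pow_zero, pow_one, Nat.choose_zero_right, Nat.cast_one, one_mul]
      rw [show x + 2 - 2*(0:ℝ) = x + 2 - 0 by ring, mul_div_mul_left _ _ hB.ne']
      ring
    · have hj' : j ≠ 0 := hj1.ne'
      simp only [hG, if_neg hj', if_neg (Nat.succ_ne_zero j)]
      have hcd : (i.choose j : ℝ) = ((i-1).choose (j-1) : ℕ) + ((i-1).choose j : ℕ) := by
        rw [show i = (i-1)+1 from (Nat.succ_pred_eq_of_pos hi).symm,
            show (i-1)+1-1 = i-1 from rfl]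
        rw [show j = (j-1)+1 from (Nat.succ_pred_eq_of_pos hj1).symm,
            show (j-1)+1-1 = j-1 from rfl]
        rw [Nat.choose_succ_succ]
        push_cast
        ring
      have hprop : ((i-1).choose j : ℝ) * j = ((i-1).choose (j-1) : ℝ) * ((i:ℝ) - j) := by
        have h1 := Nat.choose_succ_right_eq (i-1) (j-1)
        have hj2 : j - 1 + 1 = j := by omega
        have h2 : ((i-1) - (j-1) : ℕ) = i - j := by omega
        rw [hj2, h2] at h1
        have h3 : ((i - j : ℕ) : ℝ) = (i : ℝ) - j := by
          have hle : j ≤ i := hj.le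
          push_cast [hle]; ring
        calc ((i-1).choose j : ℝ) * j = (((i-1).choose j * j : ℕ) : ℝ) := by push_cast; ring
          _ = (((i-1).choose (j-1) * (i - j) : ℕ) : ℝ) := by rw [h1]
          _ = ((i-1).choose (j-1) : ℝ) * ((i:ℝ) - j) := by push_cast; rw [h3]
      have hscalar : (i.choose j : ℝ) * (x + 2 - 2*j)
          = ((i-1).choose (j-1) : ℝ) * (x - i - j + 2) + ((i-1).choose j : ℝ) * (x + 2 - j) := by
        rw [hcd]; linear_combination -hprop
      push_cast
      rw [show x - ↑i - (↑j + 1) + 3 = x - ↑i - ↑j + 2 by ring,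
          show x + 3 - (↑j + 1) = x + 2 - ↑j by ring,
          hΓA1, hΓB1, pow_succ]
      field_simp
      linear_combination hscalar
  have tele : ∑ j ∈ Finset.range i, (-G (j+1) - -G j) = -G i - -G 0 :=
    Finset.sum_range_sub (fun j => -G j) i
  rw [Finset.sum_congr rfl key, tele]
  simp only [hG, if_pos rfl, if_neg (by omega : i ≠ 0), Nat.choose_self]
  have hpow : (-1:ℝ)^(i-1) = -(-1:ℝ)^i := by
    rw [show i = (i-1)+1 from (Nat.succ_pred_eq_of_pos hi).symm, pow_succ]
    simp
  rw [hpow]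
  push_cast
  rw [show x - ↑i - ↑i + 3 = x + 3 - 2*↑i by ring]
  ring
end

section
/- With the Cauchy–Laguerre correlation kernels of parameter α > −1 and size m, for all x, z > 0 one has ∫_0^∞ K_{00}(x,y) K_{11}(z,y) dy = 0, and for all y, z > 0 one has ∫_0^∞ K_{00}(x,y) K_{11}(x,z) dx = 0. -/
open MeasureTheory Real
set_option maxHeartbeats 1000000

/-- The monic Cauchy-Laguerre biorthogonal polynomial `p_k(x) = Σ_{j=0}^k a_{k,j} x^j`. -/
noncomputable def pCL (α : ℝ) (k : ℕ) (x : ℝ) : ℝ :=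
  ∑ j ∈ Finset.range (k + 1), aCL α k j * x ^ j

/-- The monic Cauchy-Laguerre biorthogonal polynomial `q_k(y) = Σ_{j=0}^k â_{k,j} y^j`. -/
noncomputable def qCL (α : ℝ) (k : ℕ) (y : ℝ) : ℝ :=
  ∑ j ∈ Finset.range (k + 1), ahCL α k j * y ^ j

/-- Normalization `h_k = ∫∫ p_k(x) q_k(y) W(x,y) dx dy`. -/
noncomputable def hCL (α : ℝ) (k : ℕ) : ℝ :=
  ∫ x in Set.Ioi (0:ℝ), ∫ y in Set.Ioi (0:ℝ), pCL α k x * qCL α k y * Wcl α x y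

/-- The correlation kernel `K_{00}(x,y) = Σ_{k=0}^{m-1} p_k(x) q_k(y)/h_k`. -/
noncomputable def K00 (α : ℝ) (m : ℕ) (x y : ℝ) : ℝ :=
  ∑ k ∈ Finset.range m, pCL α k x * qCL α k y / hCL α k

/-- The correlation kernel `K_{01}`. -/
noncomputable def K01 (α : ℝ) (m : ℕ) (x y : ℝ) : ℝ :=
  x ^ α * Real.exp (-x) *
    ∫ v in Set.Ioi (0:ℝ), v ^ (α + 1) * Real.exp (-v) * K00 α m y v / (x + v)

/-- The correlation kernel `K_{10}`. -/
noncomputable def K10 (α : ℝ) (m : ℕ) (x y : ℝ) : ℝ :=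
  y ^ (α + 1) * Real.exp (-y) *
    ∫ w in Set.Ioi (0:ℝ), w ^ α * Real.exp (-w) * K00 α m w x / (y + w)

/-- The correlation kernel `K_{11}`. -/
noncomputable def K11 (α : ℝ) (m : ℕ) (x y : ℝ) : ℝ :=
  x ^ α * y ^ (α + 1) * Real.exp (-x - y) *
      (∫ v in Set.Ioi (0:ℝ), ∫ w in Set.Ioi (0:ℝ),
        v ^ α * Real.exp (-v) * (w ^ (α + 1) * Real.exp (-w)) * K00 α m v w /
          ((y + v) * (x + w))) -
    Wcl α x y



noncomputable def Gcl (a s : ℝ) : ℝ := ∫ t in Set.Ioi (0:ℝ), t ^ a * Real.exp (-t) / (s + t)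

lemma intOn_rpow_exp {a : ℝ} (ha : -1 < a) :
    IntegrableOn (fun t : ℝ => t ^ a * Real.exp (-t)) (Set.Ioi 0) := by
  have h := Real.GammaIntegral_convergent (s := a + 1) (by linarith)
  have he : (fun x : ℝ => Real.exp (-x) * x ^ (a + 1 - 1)) = fun t : ℝ => t ^ a * Real.exp (-t) := by
    funext t; rw [add_sub_cancel_right, mul_comm]
  rwa [he] at h

lemma meas_G_uncurry (a : ℝ) :
    Measurable (Function.uncurry fun s t : ℝ => t ^ a * Real.exp (-t) / (s + t)) := by
  apply Measurable.div
  · exact ((measurable_snd.pow measurable_const).mul (measurable_snd.neg.exp))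
  · exact measurable_fst.add measurable_snd

lemma meas_G_integrand (a s : ℝ) :
    Measurable (fun t : ℝ => t ^ a * Real.exp (-t) / (s + t)) := by
  apply Measurable.div
  · exact ((measurable_id.pow measurable_const).mul (measurable_id.neg.exp))
  · exact measurable_const.add measurable_id

lemma intOn_G_integrand {a s : ℝ} (ha : -1 < a) (hs : 0 < s) :
    IntegrableOn (fun t : ℝ => t ^ a * Real.exp (-t) / (s + t)) (Set.Ioi 0) := by
  refine Integrable.mono ((intOn_rpow_exp ha).mul_const s⁻¹)
    (meas_G_integrand a s).aestronglyMeasurable ?_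
  filter_upwards [ae_restrict_mem measurableSet_Ioi] with t ht
  have ht0 : (0:ℝ) < t := ht
  have h1 : (0:ℝ) ≤ t ^ a * Real.exp (-t) := by positivity
  rw [Real.norm_of_nonneg (by positivity), Real.norm_of_nonneg (by positivity)]
  rw [div_eq_mul_inv]
  exact mul_le_mul_of_nonneg_left (by
    apply inv_anti₀ hs; linarith) h1

lemma Gcl_nonneg {a s : ℝ} (hs : 0 < s) : 0 ≤ Gcl a s := by
  apply integral_nonneg_of_ae
  filter_upwards [ae_restrict_mem measurableSet_Ioi] with t ht
  have ht0 : (0:ℝ) < t := ht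
  positivity

lemma rpow_weighted_am_gm {s t θ : ℝ} (hs : 0 < s) (ht : 0 < t) (hθ0 : 0 ≤ θ) (hθ1 : θ ≤ 1) :
    s ^ θ * t ^ (1 - θ) ≤ s + t := by
  have hm : 0 < max s t := lt_max_of_lt_left hs
  have h1 : s ^ θ ≤ (max s t) ^ θ := Real.rpow_le_rpow hs.le (le_max_left s t) hθ0
  have h2 : t ^ (1 - θ) ≤ (max s t) ^ (1 - θ) :=
    Real.rpow_le_rpow ht.le (le_max_right s t) (by linarith)
  calc s ^ θ * t ^ (1 - θ) ≤ (max s t) ^ θ * (max s t) ^ (1 - θ) := by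
        exact mul_le_mul h1 h2 (Real.rpow_nonneg ht.le _) (Real.rpow_nonneg (le_of_lt hm) _)
    _ = max s t := by
        rw [← Real.rpow_add hm, add_sub_cancel, Real.rpow_one]
    _ ≤ s + t := by
        rcases max_cases s t with ⟨h, _⟩ | ⟨h, _⟩ <;> rw [h] <;> linarith

lemma Gcl_le {a s θ : ℝ} (hs : 0 < s) (hθ0 : 0 < θ) (hθ1 : θ ≤ 1) (haθ : 0 < a + θ) :
    Gcl a s ≤ Real.Gamma (a + θ) * s ^ (-θ) := by
  have ha : -1 < a := by linarith
  have hbint : IntegrableOn (fun t : ℝ => s ^ (-θ) * (t ^ (a + θ - 1) * Real.exp (-t)))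
      (Set.Ioi 0) := (intOn_rpow_exp (by linarith)).const_mul _
  have hle : Gcl a s ≤ ∫ t in Set.Ioi (0:ℝ), s ^ (-θ) * (t ^ (a + θ - 1) * Real.exp (-t)) := by
    apply setIntegral_mono_on (intOn_G_integrand ha hs) hbint measurableSet_Ioi
    intro t ht
    have ht0 : (0:ℝ) < t := ht
    have key : s ^ θ * t ^ (1 - θ) ≤ s + t := rpow_weighted_am_gm hs ht0 hθ0.le hθ1
    have hst : 0 < s + t := by linarith
    have hpos : (0:ℝ) < s ^ θ * t ^ (1 - θ) := by positivity
    have h2 : (s + t)⁻¹ ≤ (s ^ θ * t ^ (1 - θ))⁻¹ := inv_anti₀ hpos key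
    have h3 : t ^ a * Real.exp (-t) / (s + t) ≤ t ^ a * Real.exp (-t) / (s ^ θ * t ^ (1 - θ)) := by
      rw [div_eq_mul_inv, div_eq_mul_inv]
      exact mul_le_mul_of_nonneg_left h2 (by positivity)
    refine h3.trans (le_of_eq ?_)
    rw [Real.rpow_neg hs.le]
    rw [show t ^ a * Real.exp (-t) / (s ^ θ * t ^ (1 - θ))
        = (s ^ θ)⁻¹ * (t ^ a * t ^ (-(1 - θ)) * Real.exp (-t)) from by
      rw [Real.rpow_neg ht0.le]; field_simp]
    rw [← Real.rpow_add ht0, show a + -(1 - θ) = a + θ - 1 from by ring]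
  calc Gcl a s ≤ _ := hle
    _ = Real.Gamma (a + θ) * s ^ (-θ) := by
        rw [integral_const_mul, Real.Gamma_eq_integral haθ]
        rw [mul_comm]
        congr 1
        apply setIntegral_congr_fun measurableSet_Ioi
        intro t ht
        show t ^ (a + θ - 1) * Real.exp (-t) = Real.exp (-t) * t ^ (a + θ - 1)
        rw [mul_comm]

lemma meas_Gcl (a : ℝ) : MeasureTheory.StronglyMeasurable (fun s : ℝ => Gcl a s) :=
  ((meas_G_uncurry a).stronglyMeasurable).integral_prod_right

lemma exists_theta {a b : ℝ} (ha : -1 < a) (hb : -1 < b) (hab : 0 < a + b + 1) :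
    ∃ θ : ℝ, 0 < θ ∧ θ ≤ 1 ∧ 0 < a + θ ∧ -1 < b - θ := by
  have hlt : max 0 (-a) < min 1 (b + 1) :=
    max_lt (lt_min one_pos (by linarith)) (lt_min (by linarith) (by linarith))
  have h0 : (0:ℝ) ≤ max 0 (-a) := le_max_left _ _
  have hma : -a ≤ max 0 (-a) := le_max_right _ _
  have hm1 : min 1 (b+1) ≤ 1 := min_le_left _ _
  have hmb : min 1 (b+1) ≤ b+1 := min_le_right _ _
  exact ⟨(max 0 (-a) + min 1 (b+1))/2, by linarith, by linarith, by linarith, by linarith⟩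

lemma M_integrable {a b : ℝ} (ha : -1 < a) (hb : -1 < b) (hab : 0 < a + b + 1) :
    IntegrableOn (fun t : ℝ => t ^ b * Real.exp (-t) * Gcl a t) (Set.Ioi 0) := by
  obtain ⟨θ, hθ0, hθ1, haθ, hbθ⟩ := exists_theta ha hb hab
  have hΓ : 0 < Real.Gamma (a + θ) := Real.Gamma_pos_of_pos haθ
  refine Integrable.mono ((intOn_rpow_exp hbθ).const_mul (Real.Gamma (a+θ))) ?_ ?_
  · exact (((measurable_id.pow measurable_const).mul (measurable_id.neg.exp)).mul
      (meas_Gcl a).measurable).aestronglyMeasurable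
  · filter_upwards [ae_restrict_mem measurableSet_Ioi] with t ht
    have ht0 : (0:ℝ) < t := ht
    have hG0 : 0 ≤ Gcl a t := Gcl_nonneg ht0
    have hGle : Gcl a t ≤ Real.Gamma (a+θ) * t ^ (-θ) := Gcl_le ht0 hθ0 hθ1 haθ
    rw [Real.norm_of_nonneg (mul_nonneg (by positivity) hG0),
      Real.norm_of_nonneg (mul_nonneg hΓ.le (by positivity))]
    calc t ^ b * Real.exp (-t) * Gcl a t
        ≤ t ^ b * Real.exp (-t) * (Real.Gamma (a+θ) * t ^ (-θ)) :=
          mul_le_mul_of_nonneg_left hGle (by positivity)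
      _ = Real.Gamma (a+θ) * (t ^ (b-θ) * Real.exp (-t)) := by
          rw [show b - θ = b + -θ from by ring, Real.rpow_add ht0]; ring

lemma integral_exp_neg_mul {c : ℝ} (hc : 0 < c) :
    ∫ r in Set.Ioi (0:ℝ), Real.exp (-(c * r)) = 1 / c := by
  have h := Real.integral_rpow_mul_exp_neg_mul_Ioi (a := 1) one_pos hc
  simpa using h

lemma intOn_exp_neg_mul {c : ℝ} (hc : 0 < c) :
    IntegrableOn (fun r : ℝ => Real.exp (-(c * r))) (Set.Ioi 0) := by
  have h := exp_neg_integrableOn_Ioi 0 hc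
  simpa [neg_mul] using h

lemma integral_rpow_exp_neg_mul {a c : ℝ} (ha : -1 < a) (hc : 0 < c) :
    ∫ u in Set.Ioi (0:ℝ), u ^ a * Real.exp (-(c * u)) = (1/c) ^ (a+1) * Real.Gamma (a+1) := by
  have h := Real.integral_rpow_mul_exp_neg_mul_Ioi (a := a+1) (by linarith) hc
  simpa using h

lemma intOn_rpow_exp_mul {a c : ℝ} (ha : -1 < a) (hc : 1 ≤ c) :
    IntegrableOn (fun u : ℝ => u ^ a * Real.exp (-(c * u))) (Set.Ioi 0) := by
  refine Integrable.mono (intOn_rpow_exp ha) ?_ ?_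
  · exact ((measurable_id.pow measurable_const).mul
      ((measurable_const.mul measurable_id).neg.exp)).aestronglyMeasurable
  · filter_upwards [ae_restrict_mem measurableSet_Ioi] with t ht
    have ht0 : (0:ℝ) < t := ht
    rw [Real.norm_of_nonneg (by positivity), Real.norm_of_nonneg (by positivity)]
    exact mul_le_mul_of_nonneg_left (Real.exp_le_exp.mpr (by nlinarith)) (by positivity)

lemma integral_Ioi_one_add_rpow {p : ℝ} (hp : p < -1) :
    ∫ r in Set.Ioi (0:ℝ), (1+r) ^ p = -1/(p+1) := by
  have hemb : MeasurableEmbedding (fun x : ℝ => x + 1) :=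
    (MeasurableEquiv.addRight (1:ℝ)).measurableEmbedding
  have h := hemb.setIntegral_map (μ := volume) (fun x : ℝ => x ^ p) (Set.Ioi (1:ℝ))
  rw [map_add_right_eq_self volume 1] at h
  have hpre : (fun x : ℝ => x + 1) ⁻¹' (Set.Ioi 1) = Set.Ioi 0 := by
    ext x; simp
  rw [hpre] at h
  rw [show (fun r : ℝ => (1+r)^p) = fun r : ℝ => (r+1)^p from by funext r; rw [add_comm]]
  rw [← h, integral_Ioi_rpow_of_lt hp one_pos, Real.one_rpow]

lemma Gcl_eq {a t : ℝ} (ha : -1 < a) (ht : 0 < t) :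
    Gcl a t = Real.Gamma (a+1) *
      ∫ r in Set.Ioi (0:ℝ), Real.exp (-(t*r)) * (1+r) ^ (-(a+1)) := by
  set F : ℝ → ℝ → ℝ := fun u r => (u ^ a * Real.exp (-u)) * Real.exp (-((t+u)*r)) with hF
  have hFmeas : Measurable (Function.uncurry F) := by
    apply Measurable.mul
    · exact (measurable_fst.pow measurable_const).mul (measurable_fst.neg.exp)
    · exact ((measurable_const.add measurable_fst).mul measurable_snd).neg.exp
  have hFval : ∀ u : ℝ, 0 < u → (∫ r in Set.Ioi (0:ℝ), F u r)
      = u ^ a * Real.exp (-u) / (t + u) := by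
    intro u hu0
    have htu : (0:ℝ) < t + u := by linarith
    simp only [hF]
    rw [integral_const_mul _ _, integral_exp_neg_mul htu, mul_one_div]
  have hint : Integrable (Function.uncurry F)
      ((volume.restrict (Set.Ioi 0)).prod (volume.restrict (Set.Ioi 0))) := by
    refine (integrable_prod_iff hFmeas.aestronglyMeasurable).mpr ⟨?_, ?_⟩
    · filter_upwards [ae_restrict_mem measurableSet_Ioi] with u hu
      have hu0 : (0:ℝ) < u := hu
      have h := (intOn_exp_neg_mul (show (0:ℝ) < t + u by linarith)).const_mul
        (u ^ a * Real.exp (-u))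
      simpa only [Function.uncurry_apply_pair, hF] using h
    · simp only [Function.uncurry_apply_pair]
      apply Integrable.congr (intOn_G_integrand ha ht)
      filter_upwards [ae_restrict_mem measurableSet_Ioi] with u hu
      have hu0 : (0:ℝ) < u := hu
      have h1 : (∫ r in Set.Ioi (0:ℝ), ‖F u r‖) = ∫ r in Set.Ioi (0:ℝ), F u r := by
        apply setIntegral_congr_fun measurableSet_Ioi
        intro r hr
        simp only [hF]
        exact Real.norm_of_nonneg (by positivity)
      rw [h1, hFval u hu0]
  have hswap := MeasureTheory.integral_integral_swap hint
  have hG : Gcl a t = ∫ u in Set.Ioi (0:ℝ), ∫ r in Set.Ioi (0:ℝ), F u r := by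
    rw [Gcl]
    apply setIntegral_congr_fun measurableSet_Ioi
    intro u hu
    exact (hFval u hu).symm
  rw [hG, hswap, ← integral_const_mul _ _]
  apply setIntegral_congr_fun measurableSet_Ioi
  intro r hr
  have hr0 : (0:ℝ) < r := hr
  have h1r : (0:ℝ) < 1 + r := by linarith
  have hinner : (∫ u in Set.Ioi (0:ℝ), F u r)
      = Real.exp (-(t*r)) * ∫ u in Set.Ioi (0:ℝ), u ^ a * Real.exp (-((1+r)*u)) := by
    rw [← integral_const_mul _ _]
    apply setIntegral_congr_fun measurableSet_Ioi
    intro u hu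
    simp only [hF]
    rw [mul_assoc, ← Real.exp_add, show -u + -((t+u)*r) = -(t*r) + -((1+r)*u) from by ring,
      Real.exp_add]
    ring
  show (∫ u in Set.Ioi (0:ℝ), F u r) = _
  rw [hinner, integral_rpow_exp_neg_mul ha h1r]
  rw [one_div, Real.inv_rpow h1r.le, ← Real.rpow_neg h1r.le]
  ring

lemma M_eval {a b : ℝ} (ha : -1 < a) (hb : -1 < b) (hab : 0 < a + b + 1) :
    ∫ t in Set.Ioi (0:ℝ), t ^ b * Real.exp (-t) * Gcl a t
      = Real.Gamma (a+1) * Real.Gamma (b+1) / (a+b+1) := by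
  have hΓa : 0 < Real.Gamma (a+1) := Real.Gamma_pos_of_pos (by linarith)
  set F : ℝ → ℝ → ℝ := fun t r => (t ^ b * Real.exp (-t)) *
    (Real.exp (-(t*r)) * (1+r) ^ (-(a+1))) with hF
  have hFmeas : Measurable (Function.uncurry F) := by
    apply Measurable.mul
    · exact (measurable_fst.pow measurable_const).mul (measurable_fst.neg.exp)
    · exact ((measurable_fst.mul measurable_snd).neg.exp).mul
        ((measurable_const.add measurable_snd).pow measurable_const)
  have hsliceInt : ∀ t : ℝ, 0 < t →
      IntegrableOn (fun r => Real.exp (-(t*r)) * (1+r) ^ (-(a+1))) (Set.Ioi 0) := by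
    intro t ht0
    refine Integrable.mono (intOn_exp_neg_mul ht0) ?_ ?_
    · exact (((measurable_const.mul measurable_id).neg.exp).mul
        ((measurable_const.add measurable_id).pow measurable_const)).aestronglyMeasurable
    · filter_upwards [ae_restrict_mem measurableSet_Ioi] with r hr
      have hr0 : (0:ℝ) < r := hr
      have h1r : (0:ℝ) < 1 + r := by linarith
      rw [Real.norm_of_nonneg (by positivity), Real.norm_of_nonneg (by positivity)]
      calc Real.exp (-(t*r)) * (1+r) ^ (-(a+1))
          ≤ Real.exp (-(t*r)) * 1 := by
            apply mul_le_mul_of_nonneg_left _ (Real.exp_nonneg _)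
            exact Real.rpow_le_one_of_one_le_of_nonpos (by linarith) (by linarith)
        _ = Real.exp (-(t*r)) := mul_one _
  have hHval : ∀ t : ℝ, 0 < t → (∫ r in Set.Ioi (0:ℝ), F t r)
      = t ^ b * Real.exp (-t) * Gcl a t / Real.Gamma (a+1) := by
    intro t ht0
    simp only [hF]
    rw [integral_const_mul _ _, Gcl_eq ha ht0]
    field_simp
  have hint : Integrable (Function.uncurry F)
      ((volume.restrict (Set.Ioi 0)).prod (volume.restrict (Set.Ioi 0))) := by
    refine (integrable_prod_iff hFmeas.aestronglyMeasurable).mpr ⟨?_, ?_⟩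
    · filter_upwards [ae_restrict_mem measurableSet_Ioi] with t ht
      have ht0 : (0:ℝ) < t := ht
      have h := (hsliceInt t ht0).const_mul (t ^ b * Real.exp (-t))
      simpa only [Function.uncurry_apply_pair, hF] using h
    · simp only [Function.uncurry_apply_pair]
      apply Integrable.congr ((M_integrable ha hb hab).div_const (Real.Gamma (a+1)))
      filter_upwards [ae_restrict_mem measurableSet_Ioi] with t ht
      have ht0 : (0:ℝ) < t := ht
      have h1 : (∫ r in Set.Ioi (0:ℝ), ‖F t r‖) = ∫ r in Set.Ioi (0:ℝ), F t r := by
        apply setIntegral_congr_fun measurableSet_Ioi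
        intro r hr
        have hr0 : (0:ℝ) < r := hr
        have h1r : (0:ℝ) < 1 + r := by linarith
        simp only [hF]
        exact Real.norm_of_nonneg (by positivity)
      rw [h1, hHval t ht0]
  have hswap := MeasureTheory.integral_integral_swap hint
  have hG : ∫ t in Set.Ioi (0:ℝ), t ^ b * Real.exp (-t) * Gcl a t
      = Real.Gamma (a+1) * ∫ t in Set.Ioi (0:ℝ), ∫ r in Set.Ioi (0:ℝ), F t r := by
    rw [← integral_const_mul _ _]
    apply setIntegral_congr_fun measurableSet_Ioi
    intro t ht
    have ht0 : (0:ℝ) < t := ht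
    show t ^ b * Real.exp (-t) * Gcl a t = Real.Gamma (a+1) * ∫ r in Set.Ioi (0:ℝ), F t r
    rw [hHval t ht0]
    field_simp
  rw [hG, hswap]
  have hinner : ∀ r ∈ Set.Ioi (0:ℝ), (∫ t in Set.Ioi (0:ℝ), F t r)
      = Real.Gamma (b+1) * (1+r) ^ (-(a+b+2)) := by
    intro r hr
    have hr0 : (0:ℝ) < r := hr
    have h1r : (0:ℝ) < 1 + r := by linarith
    have h1 : (∫ t in Set.Ioi (0:ℝ), F t r)
        = (1+r) ^ (-(a+1)) * ∫ t in Set.Ioi (0:ℝ), t ^ b * Real.exp (-((1+r)*t)) := by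
      rw [← integral_const_mul _ _]
      apply setIntegral_congr_fun measurableSet_Ioi
      intro t ht
      simp only [hF]
      rw [show -((1+r)*t) = -t + -(t*r) from by ring, Real.exp_add]
      ring
    rw [h1, integral_rpow_exp_neg_mul hb h1r]
    rw [one_div, Real.inv_rpow h1r.le, ← Real.rpow_neg h1r.le]
    rw [show (-(a+b+2) : ℝ) = -(a+1) + -(b+1) from by ring, Real.rpow_add h1r]
    ring
  rw [setIntegral_congr_fun measurableSet_Ioi hinner, integral_const_mul _ _,
    integral_Ioi_one_add_rpow (show -(a+b+2) < -1 from by linarith)]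
  rw [show -(a+b+2)+1 = -(a+b+1) from by ring]
  rw [show (-1:ℝ) / -(a+b+1) = 1/(a+b+1) from by rw [neg_div_neg_eq]]
  field_simp


lemma alt_sum_poly : ∀ (n : ℕ) (Q : Polynomial ℝ), Q.degree < n →
    ∑ j ∈ Finset.range (n+1), (-1:ℝ)^j * (n.choose j) * Q.eval (j:ℝ) = 0 := by
  intro n
  induction n with
  | zero =>
    intro Q hQ
    have hQ0 : Q = 0 := by
      by_contra h
      have h1 : (0 : WithBot ℕ) ≤ Q.degree := Polynomial.zero_le_degree_iff.mpr h
      have h2 : Q.degree < (0 : WithBot ℕ) := by simpa using hQ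
      exact absurd (lt_of_le_of_lt h1 h2) (lt_irrefl _)
    simp [hQ0]
  | succ n ih =>
    intro Q hQ
    set ΔQ := Q.comp (Polynomial.X + Polynomial.C 1) - Q with hΔ
    have hcomp_eval : ∀ x : ℝ, (Q.comp (Polynomial.X + Polynomial.C 1)).eval x = Q.eval (x+1) := by
      intro x; simp [Polynomial.eval_comp]
    have hΔeval : ∀ j : ℕ, ΔQ.eval (j:ℝ) = Q.eval ((j:ℝ)+1) - Q.eval (j:ℝ) := by
      intro j; rw [hΔ, Polynomial.eval_sub, hcomp_eval]
    have hdeg : ΔQ.degree < (n : WithBot ℕ) := by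
      by_cases hQ0 : Q = 0
      · rw [hΔ, hQ0]; simp only [Polynomial.zero_comp, sub_zero, Polynomial.degree_zero]
        exact WithBot.bot_lt_coe n
      · by_cases hΔ0 : ΔQ = 0
        · rw [hΔ0, Polynomial.degree_zero]; exact WithBot.bot_lt_coe n
        · have h1 : (Polynomial.X + Polynomial.C (1:ℝ)).natDegree = 1 :=
            Polynomial.natDegree_X_add_C 1
          have hlc : (Q.comp (Polynomial.X + Polynomial.C 1)).leadingCoeff = Q.leadingCoeff := by
            rw [Polynomial.leadingCoeff_comp (by rw [h1]; exact one_ne_zero)]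
            rw [Polynomial.leadingCoeff_X_add_C, one_pow, mul_one]
          have hcne : Q.comp (Polynomial.X + Polynomial.C 1) ≠ 0 := by
            intro h
            apply hQ0
            rw [h, Polynomial.leadingCoeff_zero] at hlc
            exact Polynomial.leadingCoeff_eq_zero.mp hlc.symm
          have hdegeq : (Q.comp (Polynomial.X + Polynomial.C 1)).degree = Q.degree := by
            rw [Polynomial.degree_eq_natDegree hcne, Polynomial.degree_eq_natDegree hQ0,
              Polynomial.natDegree_comp, h1, mul_one]
          have h2 : ΔQ.degree < Q.degree := by
            rw [hΔ]
            exact lt_of_lt_of_eq (Polynomial.degree_sub_lt hdegeq hcne hlc) hdegeq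
          have hQn : Q.natDegree < n + 1 := (Polynomial.natDegree_lt_iff_degree_lt hQ0).mpr hQ
          have hΔQ : ΔQ.natDegree < Q.natDegree := by
            rw [Polynomial.degree_eq_natDegree hΔ0, Polynomial.degree_eq_natDegree hQ0] at h2
            exact_mod_cast h2
          exact (Polynomial.natDegree_lt_iff_degree_lt hΔ0).mp (by omega)
    have ihΔ := ih ΔQ hdeg
    have hA : ∑ j ∈ Finset.range (n+1), (-1:ℝ)^j * (n.choose j) * Q.eval ((j:ℝ)+1)
        = ∑ j ∈ Finset.range (n+1), (-1:ℝ)^j * (n.choose j) * Q.eval (j:ℝ) := by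
      have h2 : ∑ j ∈ Finset.range (n+1),
          ((-1:ℝ)^j * (n.choose j) * Q.eval ((j:ℝ)+1)
            - (-1:ℝ)^j * (n.choose j) * Q.eval (j:ℝ)) = 0 := by
        rw [← ihΔ]
        apply Finset.sum_congr rfl
        intro j hj
        rw [hΔeval j]
        ring
      rw [Finset.sum_sub_distrib] at h2
      linarith
    have hT : ∑ j ∈ Finset.range (n+2), (-1:ℝ)^j * ((n+1).choose j) * Q.eval (j:ℝ)
        = (∑ j ∈ Finset.range (n+1), (-((-1:ℝ)^j * (n.choose j) * Q.eval ((j:ℝ)+1))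
            + -((-1:ℝ)^j * (n.choose (j+1)) * Q.eval ((j:ℝ)+1))))
          + Q.eval 0 := by
      rw [Finset.sum_range_succ' _ (n+1)]
      congr 1
      · apply Finset.sum_congr rfl
        intro j hj
        push_cast [Nat.choose_succ_succ]
        ring
      · simp
    have hS : ∑ j ∈ Finset.range (n+1), -((-1:ℝ)^j * (n.choose (j+1)) * Q.eval ((j:ℝ)+1))
        = -(Q.eval 0) + ∑ j ∈ Finset.range (n+1), (-1:ℝ)^j * (n.choose j) * Q.eval (j:ℝ) := by
      have hright : ∑ j ∈ Finset.range (n+1), (-1:ℝ)^j * (n.choose j) * Q.eval (j:ℝ)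
          = (∑ j ∈ Finset.range n, (-1:ℝ)^(j+1) * (n.choose (j+1)) * Q.eval ((j:ℝ)+1))
            + Q.eval 0 := by
        rw [Finset.sum_range_succ' _ n]
        congr 1
        · apply Finset.sum_congr rfl
          intro j hj
          push_cast
          ring
        · simp
      have hleft : ∑ j ∈ Finset.range (n+1), -((-1:ℝ)^j * (n.choose (j+1)) * Q.eval ((j:ℝ)+1))
          = ∑ j ∈ Finset.range n, (-1:ℝ)^(j+1) * (n.choose (j+1)) * Q.eval ((j:ℝ)+1) := by
        rw [Finset.sum_range_succ]
        rw [Nat.choose_succ_self]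
        simp only [Nat.cast_zero, mul_zero, zero_mul, neg_zero, add_zero]
        apply Finset.sum_congr rfl
        intro j hj
        rw [pow_succ]
        ring
      rw [hleft, hright]
      ring
    rw [hT]
    rw [Finset.sum_add_distrib, hS]
    have : ∑ j ∈ Finset.range (n+1), -((-1:ℝ)^j * (n.choose j) * Q.eval ((j:ℝ)+1))
        = -∑ j ∈ Finset.range (n+1), (-1:ℝ)^j * (n.choose j) * Q.eval ((j:ℝ)+1) := by
      rw [← Finset.sum_neg_distrib]
    rw [this, hA]
    ring

lemma Gamma_ratio {c : ℝ} (hc : 0 < c) (n : ℕ) :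
    Real.Gamma (c + n) = (∏ r ∈ Finset.range n, (c + r)) * Real.Gamma c := by
  induction n with
  | zero => simp
  | succ n ih =>
    have harg : c + ((n:ℝ)+1) = (c + n) + 1 := by ring
    have hpos : (0:ℝ) < c + n := by
      have : (0:ℝ) ≤ n := Nat.cast_nonneg n
      linarith
    rw [show ((n+1 : ℕ) : ℝ) = (n:ℝ)+1 from by push_cast; ring, harg,
      Real.Gamma_add_one hpos.ne', ih, Finset.prod_range_succ]
    ring

lemma key_sum {c : ℝ} (hc : 0 < c) {n d : ℕ} (hd : d < n) :
    ∑ j ∈ Finset.range (n+1), (-1:ℝ)^j * (n.choose j) *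
      (Real.Gamma (c + n + j) / Real.Gamma (c + j) / (c + d + j)) = 0 := by
  set Q : Polynomial ℝ :=
    ∏ r ∈ (Finset.range n).erase d, (Polynomial.X + Polynomial.C (c + r)) with hQd
  have hdeg : Q.degree < (n : WithBot ℕ) := by
    rw [hQd, Polynomial.degree_prod]
    have h1 : ∀ r ∈ (Finset.range n).erase d,
        (Polynomial.X + Polynomial.C ((c:ℝ) + r)).degree = 1 := fun r _ =>
      Polynomial.degree_X_add_C _
    rw [Finset.sum_congr rfl h1, Finset.sum_const,
      Finset.card_erase_of_mem (Finset.mem_range.mpr hd), Finset.card_range,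
      nsmul_eq_mul, mul_one]
    exact_mod_cast (by omega : n - 1 < n)
  have halt := alt_sum_poly n Q hdeg
  rw [← halt]
  apply Finset.sum_congr rfl
  intro j hj
  congr 1
  -- Γ(c+n+j)/Γ(c+j)/(c+d+j) = Q.eval j
  have hcj : (0:ℝ) < c + j := by
    have : (0:ℝ) ≤ j := Nat.cast_nonneg j
    linarith
  have hratio : Real.Gamma (c + n + j) / Real.Gamma (c + j)
      = ∏ r ∈ Finset.range n, (c + j + r) := by
    rw [show c + n + (j:ℝ) = (c + j) + n from by ring, Gamma_ratio hcj n,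
      mul_div_assoc, div_self (Real.Gamma_pos_of_pos hcj).ne', mul_one]
  have hsplit : ∏ r ∈ Finset.range n, (c + (j:ℝ) + r)
      = (c + j + d) * ∏ r ∈ (Finset.range n).erase d, (c + (j:ℝ) + r) :=
    (Finset.mul_prod_erase (Finset.range n) _ (Finset.mem_range.mpr hd)).symm
  have hcdj : (0:ℝ) < c + j + d := by
    have : (0:ℝ) ≤ (d:ℝ) := Nat.cast_nonneg d
    linarith
  rw [hratio, hsplit, show c + (d:ℝ) + j = c + j + d from by ring,
    mul_div_cancel_left₀ _ hcdj.ne']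
  rw [hQd, Polynomial.eval_prod]
  apply Finset.prod_congr rfl
  intro r _
  simp only [Polynomial.eval_add, Polynomial.eval_X, Polynomial.eval_C]
  ring

lemma double_sum_zero {c : ℝ} (hc : 0 < c) {k l : ℕ} (hkl : k < l) :
    ∑ i ∈ Finset.range (k+1), ∑ j ∈ Finset.range (l+1),
      ((-1:ℝ)^i * (k.choose i) * (Real.Gamma (c+k+i) / Real.Gamma (c+i)))
        * ((-1:ℝ)^j * (l.choose j) * (Real.Gamma (c+l+j) / Real.Gamma (c+j))) / (c+i+j)
      = 0 := by
  apply Finset.sum_eq_zero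
  intro i hi
  have hil : i < l := by
    have := Finset.mem_range.mp hi
    omega
  have hkey := key_sum hc (d := i) hil
  have : ∑ j ∈ Finset.range (l+1),
      ((-1:ℝ)^i * (k.choose i) * (Real.Gamma (c+k+i) / Real.Gamma (c+i)))
        * ((-1:ℝ)^j * (l.choose j) * (Real.Gamma (c+l+j) / Real.Gamma (c+j))) / (c+i+j)
      = ((-1:ℝ)^i * (k.choose i) * (Real.Gamma (c+k+i) / Real.Gamma (c+i)))
        * ∑ j ∈ Finset.range (l+1), (-1:ℝ)^j * (l.choose j) *
            (Real.Gamma (c + l + j) / Real.Gamma (c + j) / (c + i + j)) := by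
    rw [Finset.mul_sum]
    apply Finset.sum_congr rfl
    intro j _
    ring
  rw [this, hkey, mul_zero]

lemma neg_one_pow_sub_s17 {k i : ℕ} (h : i ≤ k) : (-1:ℝ)^(k-i) = (-1)^k * (-1)^i := by
  have h1 : (-1:ℝ)^(k-i) * (-1)^i = (-1)^k := by
    rw [← pow_add]; congr 1; omega
  have h2 : (-1:ℝ)^i * (-1)^i = 1 := by
    rw [← mul_pow]; norm_num
  calc (-1:ℝ)^(k-i) = (-1)^(k-i) * ((-1)^i * (-1)^i) := by rw [h2, mul_one]
    _ = (-1)^k * (-1)^i := by rw [← mul_assoc, h1]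

noncomputable def KmB (α : ℝ) (k l : ℕ) : ℝ :=
  (-1:ℝ)^(k+l) * (Real.Gamma (2*α+k+2) * Real.Gamma (α+k+1) / Real.Gamma (2*α+2*k+2))
    * (Real.Gamma (2*α+l+2) * Real.Gamma (α+l+2) / Real.Gamma (2*α+2*l+2))

lemma term_eq {α : ℝ} (hα : -1 < α) {k l i j : ℕ} (hik : i ≤ k) (hjl : j ≤ l) :
    aCL α k i * ahCL α l j * (Real.Gamma (α+i+1) * Real.Gamma (α+j+2) / (2*α+i+j+2))
    = KmB α k l *
      (((-1:ℝ)^i * (k.choose i) * (Real.Gamma (2*α+2+k+i) / Real.Gamma (2*α+2+i)))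
        * ((-1:ℝ)^j * (l.choose j) * (Real.Gamma (2*α+2+l+j) / Real.Gamma (2*α+2+j)))
        / (2*α+2+i+j)) := by
  have hi0 : (0:ℝ) ≤ i := Nat.cast_nonneg i
  have hj0 : (0:ℝ) ≤ j := Nat.cast_nonneg j
  have hk0 : (0:ℝ) ≤ k := Nat.cast_nonneg k
  have hl0 : (0:ℝ) ≤ l := Nat.cast_nonneg l
  have g1 : (0:ℝ) < Real.Gamma (2*α+2*k+2) := Real.Gamma_pos_of_pos (by linarith)
  have g2 : (0:ℝ) < Real.Gamma (2*α+2+i) := Real.Gamma_pos_of_pos (by linarith)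
  have g3 : (0:ℝ) < Real.Gamma (α+i+1) := Real.Gamma_pos_of_pos (by linarith)
  have g4 : (0:ℝ) < Real.Gamma (2*α+2*l+2) := Real.Gamma_pos_of_pos (by linarith)
  have g5 : (0:ℝ) < Real.Gamma (2*α+2+j) := Real.Gamma_pos_of_pos (by linarith)
  have g6 : (0:ℝ) < Real.Gamma (α+j+2) := Real.Gamma_pos_of_pos (by linarith)
  have hden : (0:ℝ) < 2*α+2+i+j := by linarith
  rw [aCL, ahCL, neg_one_pow_sub_s17 hik, neg_one_pow_sub_s17 hjl, KmB, pow_add,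
    show (2*α+(k:ℝ)+i+2 : ℝ) = 2*α+2+k+i from by ring,
    show (2*α+(i:ℝ)+2 : ℝ) = 2*α+2+i from by ring,
    show (2*α+(l:ℝ)+j+2 : ℝ) = 2*α+2+l+j from by ring,
    show (2*α+(j:ℝ)+2 : ℝ) = 2*α+2+j from by ring,
    show (2*α+(i:ℝ)+j+2 : ℝ) = 2*α+2+i+j from by ring]
  generalize Real.Gamma (2*α+2*k+2) = A1 at g1 ⊢
  generalize Real.Gamma (2*α+2+i) = A2 at g2 ⊢
  generalize Real.Gamma (α+i+1) = A3 at g3 ⊢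
  generalize Real.Gamma (2*α+2*l+2) = A4 at g4 ⊢
  generalize Real.Gamma (2*α+2+j) = A5 at g5 ⊢
  generalize Real.Gamma (α+j+2) = A6 at g6 ⊢
  field_simp

noncomputable def Bm (α : ℝ) (k l : ℕ) : ℝ :=
  ∑ i ∈ Finset.range (k+1), ∑ j ∈ Finset.range (l+1),
    aCL α k i * ahCL α l j * (Real.Gamma (α+i+1) * Real.Gamma (α+j+2) / (2*α+i+j+2))

lemma Bm_offdiag {α : ℝ} (hα : -1 < α) {k l : ℕ} (hkl : k ≠ l) : Bm α k l = 0 := by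
  have hc : (0:ℝ) < 2*α+2 := by linarith
  have hBm : Bm α k l = KmB α k l * ∑ i ∈ Finset.range (k+1), ∑ j ∈ Finset.range (l+1),
      (((-1:ℝ)^i * (k.choose i) * (Real.Gamma (2*α+2+k+i) / Real.Gamma (2*α+2+i)))
        * ((-1:ℝ)^j * (l.choose j) * (Real.Gamma (2*α+2+l+j) / Real.Gamma (2*α+2+j)))
        / (2*α+2+i+j)) := by
    rw [Bm, Finset.mul_sum]
    apply Finset.sum_congr rfl
    intro i hi
    rw [Finset.mul_sum]
    apply Finset.sum_congr rfl
    intro j hj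
    exact term_eq hα (Nat.lt_succ_iff.mp (Finset.mem_range.mp hi))
      (Nat.lt_succ_iff.mp (Finset.mem_range.mp hj))
  rw [hBm]
  rcases lt_or_gt_of_ne hkl with h | h
  · rw [double_sum_zero hc h, mul_zero]
  · rw [Finset.sum_comm]
    have hz := double_sum_zero hc h
    have heq : ∑ j ∈ Finset.range (l+1), ∑ i ∈ Finset.range (k+1),
        (((-1:ℝ)^i * (k.choose i) * (Real.Gamma (2*α+2+k+i) / Real.Gamma (2*α+2+i)))
          * ((-1:ℝ)^j * (l.choose j) * (Real.Gamma (2*α+2+l+j) / Real.Gamma (2*α+2+j)))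
          / (2*α+2+i+j))
        = ∑ i ∈ Finset.range (l+1), ∑ j ∈ Finset.range (k+1),
        (((-1:ℝ)^i * (l.choose i) * (Real.Gamma (2*α+2+l+i) / Real.Gamma (2*α+2+i)))
          * ((-1:ℝ)^j * (k.choose j) * (Real.Gamma (2*α+2+k+j) / Real.Gamma (2*α+2+j)))
          / (2*α+2+i+j)) := by
      apply Finset.sum_congr rfl
      intro a _
      apply Finset.sum_congr rfl
      intro b _
      rw [show (2*α+2+(b:ℝ)+a : ℝ) = 2*α+2+a+b from by ring]
      ring
    rw [heq, hz, mul_zero]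


noncomputable def Qt (α : ℝ) (k : ℕ) (s : ℝ) : ℝ :=
  ∑ j ∈ Finset.range (k+1), ahCL α k j * Gcl (α+1+j) s

noncomputable def Pt (α : ℝ) (k : ℕ) (s : ℝ) : ℝ :=
  ∑ i ∈ Finset.range (k+1), aCL α k i * Gcl (α+i) s

lemma exp_q {α : ℝ} (hα : -1 < α) (j : ℕ) : (-1:ℝ) < α + 1 + j := by
  have : (0:ℝ) ≤ j := Nat.cast_nonneg j; linarith

lemma exp_p {α : ℝ} (hα : -1 < α) (i : ℕ) : (-1:ℝ) < α + i := by
  have : (0:ℝ) ≤ i := Nat.cast_nonneg i; linarith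

lemma q_expand {α : ℝ} (k : ℕ) (s : ℝ) : ∀ y ∈ Set.Ioi (0:ℝ),
    qCL α k y * (y^(α+1) * Real.exp (-y)) / (s+y)
      = ∑ j ∈ Finset.range (k+1), ahCL α k j * (y^(α+1+(j:ℝ)) * Real.exp (-y) / (s+y)) := by
  intro y hy
  have hy0 : (0:ℝ) < y := hy
  rw [qCL, Finset.sum_mul, Finset.sum_div]
  apply Finset.sum_congr rfl
  intro j _
  rw [show y^(α+1+(j:ℝ)) = y^(α+1) * y^j from by
    rw [Real.rpow_add hy0, Real.rpow_natCast]]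
  ring

lemma p_expand {α : ℝ} (k : ℕ) (s : ℝ) : ∀ y ∈ Set.Ioi (0:ℝ),
    pCL α k y * (y^α * Real.exp (-y)) / (s+y)
      = ∑ i ∈ Finset.range (k+1), aCL α k i * (y^(α+(i:ℝ)) * Real.exp (-y) / (s+y)) := by
  intro y hy
  have hy0 : (0:ℝ) < y := hy
  rw [pCL, Finset.sum_mul, Finset.sum_div]
  apply Finset.sum_congr rfl
  intro i _
  rw [show y^(α+(i:ℝ)) = y^α * y^i from by
    rw [Real.rpow_add hy0, Real.rpow_natCast]]
  ring

lemma qG_expand {α : ℝ} (k : ℕ) (b : ℝ) : ∀ y ∈ Set.Ioi (0:ℝ),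
    qCL α k y * (y^(α+1) * Real.exp (-y)) * Gcl b y
      = ∑ j ∈ Finset.range (k+1), ahCL α k j * (y^(α+1+(j:ℝ)) * Real.exp (-y) * Gcl b y) := by
  intro y hy
  have hy0 : (0:ℝ) < y := hy
  rw [qCL, Finset.sum_mul, Finset.sum_mul]
  apply Finset.sum_congr rfl
  intro j _
  rw [show y^(α+1+(j:ℝ)) = y^(α+1) * y^j from by
    rw [Real.rpow_add hy0, Real.rpow_natCast]]
  ring

lemma pG_expand {α : ℝ} (k : ℕ) (b : ℝ) : ∀ y ∈ Set.Ioi (0:ℝ),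
    pCL α k y * (y^α * Real.exp (-y)) * Gcl b y
      = ∑ i ∈ Finset.range (k+1), aCL α k i * (y^(α+(i:ℝ)) * Real.exp (-y) * Gcl b y) := by
  intro y hy
  have hy0 : (0:ℝ) < y := hy
  rw [pCL, Finset.sum_mul, Finset.sum_mul]
  apply Finset.sum_congr rfl
  intro i _
  rw [show y^(α+(i:ℝ)) = y^α * y^i from by
    rw [Real.rpow_add hy0, Real.rpow_natCast]]
  ring

lemma L_q {α : ℝ} (hα : -1 < α) (k : ℕ) {s : ℝ} (hs : 0 < s) :
    ∫ y in Set.Ioi (0:ℝ), qCL α k y * (y^(α+1) * Real.exp (-y)) / (s+y) = Qt α k s := by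
  rw [setIntegral_congr_fun measurableSet_Ioi (q_expand k s),
    integral_finset_sum _ (fun j _ => ((intOn_G_integrand (exp_q hα j) hs).const_mul _)), Qt]
  apply Finset.sum_congr rfl
  intro j _
  rw [integral_const_mul _ _]
  rfl

lemma L_p {α : ℝ} (hα : -1 < α) (k : ℕ) {s : ℝ} (hs : 0 < s) :
    ∫ y in Set.Ioi (0:ℝ), pCL α k y * (y^α * Real.exp (-y)) / (s+y) = Pt α k s := by
  rw [setIntegral_congr_fun measurableSet_Ioi (p_expand k s),
    integral_finset_sum _ (fun i _ => ((intOn_G_integrand (exp_p hα i) hs).const_mul _)), Pt]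
  apply Finset.sum_congr rfl
  intro i _
  rw [integral_const_mul _ _]
  rfl

lemma intq {α : ℝ} (hα : -1 < α) (k : ℕ) {s : ℝ} (hs : 0 < s) :
    IntegrableOn (fun y : ℝ => qCL α k y * (y^(α+1) * Real.exp (-y)) / (s+y)) (Set.Ioi 0) := by
  have h := integrable_finset_sum (μ := volume.restrict (Set.Ioi 0)) (Finset.range (k+1))
    (fun j _ => ((intOn_G_integrand (exp_q hα j) hs).const_mul (ahCL α k j)))
  apply h.congr
  filter_upwards [ae_restrict_mem measurableSet_Ioi] with y hy
  exact (q_expand k s y hy).symm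

lemma intp {α : ℝ} (hα : -1 < α) (k : ℕ) {s : ℝ} (hs : 0 < s) :
    IntegrableOn (fun y : ℝ => pCL α k y * (y^α * Real.exp (-y)) / (s+y)) (Set.Ioi 0) := by
  have h := integrable_finset_sum (μ := volume.restrict (Set.Ioi 0)) (Finset.range (k+1))
    (fun i _ => ((intOn_G_integrand (exp_p hα i) hs).const_mul (aCL α k i)))
  apply h.congr
  filter_upwards [ae_restrict_mem measurableSet_Ioi] with y hy
  exact (p_expand k s y hy).symm

lemma intqG {α : ℝ} (hα : -1 < α) (k : ℕ) {b : ℝ} (hb : -1 < b) (hb2 : 0 < α + b + 2) :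
    IntegrableOn (fun y : ℝ => qCL α k y * (y^(α+1) * Real.exp (-y)) * Gcl b y) (Set.Ioi 0) := by
  have h := integrable_finset_sum (μ := volume.restrict (Set.Ioi 0)) (Finset.range (k+1))
    (fun j _ => ((M_integrable hb (exp_q hα j)
      (by have : (0:ℝ) ≤ j := Nat.cast_nonneg j; linarith)).const_mul (ahCL α k j)))
  apply h.congr
  filter_upwards [ae_restrict_mem measurableSet_Ioi] with y hy
  exact (qG_expand k b y hy).symm

lemma intpG {α : ℝ} (hα : -1 < α) (k : ℕ) {b : ℝ} (hb : -1 < b) (hb2 : 0 < α + b + 1) :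
    IntegrableOn (fun y : ℝ => pCL α k y * (y^α * Real.exp (-y)) * Gcl b y) (Set.Ioi 0) := by
  have h := integrable_finset_sum (μ := volume.restrict (Set.Ioi 0)) (Finset.range (k+1))
    (fun i _ => ((M_integrable hb (exp_p hα i)
      (by have : (0:ℝ) ≤ i := Nat.cast_nonneg i; linarith)).const_mul (aCL α k i)))
  apply h.congr
  filter_upwards [ae_restrict_mem measurableSet_Ioi] with y hy
  exact (pG_expand k b y hy).symm

lemma L_qG {α : ℝ} (hα : -1 < α) (k : ℕ) {b : ℝ} (hb : -1 < b) (hb2 : 0 < α + b + 2) :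
    ∫ y in Set.Ioi (0:ℝ), qCL α k y * (y^(α+1) * Real.exp (-y)) * Gcl b y
      = ∑ j ∈ Finset.range (k+1), ahCL α k j *
          (Real.Gamma (b+1) * Real.Gamma (α+1+(j:ℝ)+1) / (b+(α+1+(j:ℝ))+1)) := by
  rw [setIntegral_congr_fun measurableSet_Ioi (qG_expand k b),
    integral_finset_sum _ (fun j _ => ((M_integrable hb (exp_q hα j)
      (by have : (0:ℝ) ≤ j := Nat.cast_nonneg j; linarith)).const_mul _))]
  apply Finset.sum_congr rfl
  intro j _
  rw [integral_const_mul _ _, M_eval hb (exp_q hα j)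
    (by have : (0:ℝ) ≤ j := Nat.cast_nonneg j; linarith)]

lemma L_pG {α : ℝ} (hα : -1 < α) (k : ℕ) {b : ℝ} (hb : -1 < b) (hb2 : 0 < α + b + 1) :
    ∫ y in Set.Ioi (0:ℝ), pCL α k y * (y^α * Real.exp (-y)) * Gcl b y
      = ∑ i ∈ Finset.range (k+1), aCL α k i *
          (Real.Gamma (b+1) * Real.Gamma (α+(i:ℝ)+1) / (b+(α+(i:ℝ))+1)) := by
  rw [setIntegral_congr_fun measurableSet_Ioi (pG_expand k b),
    integral_finset_sum _ (fun i _ => ((M_integrable hb (exp_p hα i)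
      (by have : (0:ℝ) ≤ i := Nat.cast_nonneg i; linarith)).const_mul _))]
  apply Finset.sum_congr rfl
  intro i _
  rw [integral_const_mul _ _, M_eval hb (exp_p hα i)
    (by have : (0:ℝ) ≤ i := Nat.cast_nonneg i; linarith)]

lemma intqPt {α : ℝ} (hα : -1 < α) (k l : ℕ) :
    IntegrableOn (fun y : ℝ => qCL α k y * (y^(α+1) * Real.exp (-y)) * Pt α l y)
      (Set.Ioi 0) := by
  have h := integrable_finset_sum (μ := volume.restrict (Set.Ioi 0)) (Finset.range (l+1))
    (fun i _ => ((intqG hα k (exp_p hα i)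
      (by have : (0:ℝ) ≤ i := Nat.cast_nonneg i; linarith)).const_mul (aCL α l i)))
  apply h.congr
  filter_upwards [ae_restrict_mem measurableSet_Ioi] with y hy
  rw [Pt, Finset.mul_sum]
  apply Finset.sum_congr rfl
  intro i _
  ring

lemma intpQt {α : ℝ} (hα : -1 < α) (k l : ℕ) :
    IntegrableOn (fun y : ℝ => pCL α k y * (y^α * Real.exp (-y)) * Qt α l y)
      (Set.Ioi 0) := by
  have h := integrable_finset_sum (μ := volume.restrict (Set.Ioi 0)) (Finset.range (l+1))
    (fun j _ => ((intpG hα k (exp_q hα j)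
      (by have : (0:ℝ) ≤ j := Nat.cast_nonneg j; linarith)).const_mul (ahCL α l j)))
  apply h.congr
  filter_upwards [ae_restrict_mem measurableSet_Ioi] with y hy
  rw [Qt, Finset.mul_sum]
  apply Finset.sum_congr rfl
  intro j _
  ring

lemma L_mix1 {α : ℝ} (hα : -1 < α) (k l : ℕ) :
    ∫ y in Set.Ioi (0:ℝ), qCL α k y * (y^(α+1) * Real.exp (-y)) * Pt α l y = Bm α l k := by
  have h1 : ∀ y ∈ Set.Ioi (0:ℝ), qCL α k y * (y^(α+1) * Real.exp (-y)) * Pt α l y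
      = ∑ i ∈ Finset.range (l+1), aCL α l i *
          (qCL α k y * (y^(α+1) * Real.exp (-y)) * Gcl (α+(i:ℝ)) y) := by
    intro y hy
    rw [Pt, Finset.mul_sum]
    apply Finset.sum_congr rfl
    intro i _
    ring
  rw [setIntegral_congr_fun measurableSet_Ioi h1,
    integral_finset_sum _ (fun i _ => ((intqG hα k (exp_p hα i)
      (by have : (0:ℝ) ≤ i := Nat.cast_nonneg i; linarith)).const_mul _)), Bm]
  apply Finset.sum_congr rfl
  intro i _
  rw [integral_const_mul _ _, L_qG hα k (exp_p hα i)
    (by have : (0:ℝ) ≤ i := Nat.cast_nonneg i; linarith), Finset.mul_sum]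
  apply Finset.sum_congr rfl
  intro j _
  rw [show (α+1+(j:ℝ)+1 : ℝ) = α+(j:ℝ)+2 from by ring,
    show (α+(i:ℝ)+(α+1+(j:ℝ))+1 : ℝ) = 2*α+(i:ℝ)+(j:ℝ)+2 from by ring]
  ring

lemma L_mix2 {α : ℝ} (hα : -1 < α) (k l : ℕ) :
    ∫ x in Set.Ioi (0:ℝ), pCL α k x * (x^α * Real.exp (-x)) * Qt α l x = Bm α k l := by
  have h1 : ∀ x ∈ Set.Ioi (0:ℝ), pCL α k x * (x^α * Real.exp (-x)) * Qt α l x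
      = ∑ j ∈ Finset.range (l+1), ahCL α l j *
          (pCL α k x * (x^α * Real.exp (-x)) * Gcl (α+1+(j:ℝ)) x) := by
    intro x hx
    rw [Qt, Finset.mul_sum]
    apply Finset.sum_congr rfl
    intro j _
    ring
  rw [setIntegral_congr_fun measurableSet_Ioi h1,
    integral_finset_sum _ (fun j _ => ((intpG hα k (exp_q hα j)
      (by have : (0:ℝ) ≤ j := Nat.cast_nonneg j; linarith)).const_mul _)), Bm,
    Finset.sum_comm]
  apply Finset.sum_congr rfl
  intro j _
  rw [integral_const_mul _ _, L_pG hα k (exp_q hα j)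
    (by have : (0:ℝ) ≤ j := Nat.cast_nonneg j; linarith), Finset.mul_sum]
  apply Finset.sum_congr rfl
  intro i _
  rw [show (α+1+(j:ℝ)+1 : ℝ) = α+(j:ℝ)+2 from by ring,
    show (α+1+(j:ℝ)+(α+(i:ℝ))+1 : ℝ) = 2*α+(i:ℝ)+(j:ℝ)+2 from by ring]
  ring

lemma L_h {α : ℝ} (hα : -1 < α) (k : ℕ) : hCL α k = Bm α k k := by
  rw [hCL]
  have h1 : ∀ x ∈ Set.Ioi (0:ℝ), (∫ y in Set.Ioi (0:ℝ), pCL α k x * qCL α k y * Wcl α x y)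
      = pCL α k x * (x^α * Real.exp (-x)) * Qt α k x := by
    intro x hx
    have hx0 : (0:ℝ) < x := hx
    have h2 : ∀ y ∈ Set.Ioi (0:ℝ), pCL α k x * qCL α k y * Wcl α x y
        = (pCL α k x * (x^α * Real.exp (-x)))
          * (qCL α k y * (y^(α+1) * Real.exp (-y)) / (x+y)) := by
      intro y hy
      rw [Wcl, show Real.exp (-x-y) = Real.exp (-x) * Real.exp (-y) from by
        rw [show (-x-y:ℝ) = -x + -y from by ring, Real.exp_add]]
      ring
    rw [setIntegral_congr_fun measurableSet_Ioi h2, integral_const_mul _ _, L_q hα k hx0]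
  rw [setIntegral_congr_fun measurableSet_Ioi h1, L_mix2 hα k k]

lemma L_K00q {α : ℝ} (hα : -1 < α) (m : ℕ) (y : ℝ) {s : ℝ} (hs : 0 < s) :
    ∫ v in Set.Ioi (0:ℝ), v^(α+1) * Real.exp (-v) * K00 α m y v / (s+v)
      = ∑ k ∈ Finset.range m, pCL α k y * Qt α k s / hCL α k := by
  have h1 : ∀ v ∈ Set.Ioi (0:ℝ), v^(α+1) * Real.exp (-v) * K00 α m y v / (s+v)
      = ∑ k ∈ Finset.range m, (pCL α k y / hCL α k)
          * (qCL α k v * (v^(α+1) * Real.exp (-v)) / (s+v)) := by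
    intro v hv
    rw [K00, Finset.mul_sum, Finset.sum_div]
    apply Finset.sum_congr rfl
    intro k _
    ring
  rw [setIntegral_congr_fun measurableSet_Ioi h1,
    integral_finset_sum _ (fun k _ => (intq hα k hs).const_mul _)]
  apply Finset.sum_congr rfl
  intro k _
  rw [integral_const_mul _ _, L_q hα k hs]
  ring

lemma L_D {α : ℝ} (hα : -1 < α) (m : ℕ) {s t : ℝ} (hs : 0 < s) (ht : 0 < t) :
    (∫ v in Set.Ioi (0:ℝ), ∫ w in Set.Ioi (0:ℝ),
        v ^ α * Real.exp (-v) * (w ^ (α + 1) * Real.exp (-w)) * K00 α m v w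
          / ((s + v) * (t + w)))
      = ∑ k ∈ Finset.range m, Pt α k s * Qt α k t / hCL α k := by
  have h1 : ∀ v ∈ Set.Ioi (0:ℝ), (∫ w in Set.Ioi (0:ℝ),
        v ^ α * Real.exp (-v) * (w ^ (α + 1) * Real.exp (-w)) * K00 α m v w
          / ((s + v) * (t + w)))
      = ∑ k ∈ Finset.range m, (Qt α k t / hCL α k)
          * (pCL α k v * (v^α * Real.exp (-v)) / (s+v)) := by
    intro v hv
    have h2 : ∀ w ∈ Set.Ioi (0:ℝ),
        v ^ α * Real.exp (-v) * (w ^ (α + 1) * Real.exp (-w)) * K00 α m v w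
          / ((s + v) * (t + w))
        = (v^α * Real.exp (-v) / (s+v))
          * (w^(α+1) * Real.exp (-w) * K00 α m v w / (t+w)) := by
      intro w hw
      rw [← div_div]
      ring
    rw [setIntegral_congr_fun measurableSet_Ioi h2, integral_const_mul _ _,
      L_K00q hα m v ht, Finset.mul_sum]
    apply Finset.sum_congr rfl
    intro k _
    ring
  rw [setIntegral_congr_fun measurableSet_Ioi h1,
    integral_finset_sum _ (fun k _ => (intp hα k hs).const_mul _)]
  apply Finset.sum_congr rfl
  intro k _
  rw [integral_const_mul _ _, L_p hα k hs]
  ring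


theorem K00_K11_pointwise_zero (α : ℝ) (hα : -1 < α) (m : ℕ) (hm : 1 ≤ m) :
    (∀ x z : ℝ, 0 < x → 0 < z →
      (∫ y in Set.Ioi (0:ℝ), K00 α m x y * K11 α m z y) = 0) ∧
    (∀ y z : ℝ, 0 < y → 0 < z →
      (∫ x in Set.Ioi (0:ℝ), K00 α m x y * K11 α m x z) = 0) := by
  constructor
  · intro x z hx hz
    have hptw : ∀ y ∈ Set.Ioi (0:ℝ), K00 α m x y * K11 α m z y
        = (∑ k ∈ Finset.range m, ∑ l ∈ Finset.range m,
            (pCL α k x * (z^α * Real.exp (-z)) * Qt α l z / (hCL α k * hCL α l))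
              * (qCL α k y * (y^(α+1) * Real.exp (-y)) * Pt α l y))
          - ∑ k ∈ Finset.range m,
            (pCL α k x * (z^α * Real.exp (-z)) / hCL α k)
              * (qCL α k y * (y^(α+1) * Real.exp (-y)) / (z+y)) := by
      intro y hy
      have hy0 : (0:ℝ) < y := hy
      rw [K11, L_D hα m hy0 hz, Wcl,
        show Real.exp (-z-y) = Real.exp (-z) * Real.exp (-y) from by
          rw [show (-z-y:ℝ) = -z + -y from by ring, Real.exp_add],
        K00, Finset.sum_mul, ← Finset.sum_sub_distrib]
      apply Finset.sum_congr rfl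
      intro k _
      rw [mul_sub]
      congr 1
      · rw [Finset.mul_sum, Finset.mul_sum]
        apply Finset.sum_congr rfl
        intro l _
        ring
      · ring
    rw [setIntegral_congr_fun measurableSet_Ioi hptw]
    have hint1 : ∀ k ∈ Finset.range m, Integrable (fun y => ∑ l ∈ Finset.range m,
        (pCL α k x * (z^α * Real.exp (-z)) * Qt α l z / (hCL α k * hCL α l))
          * (qCL α k y * (y^(α+1) * Real.exp (-y)) * Pt α l y))
        (volume.restrict (Set.Ioi 0)) :=
      fun k _ => integrable_finset_sum _ (fun l _ => (intqPt hα k l).const_mul _)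
    have hint2 : ∀ k ∈ Finset.range m, Integrable (fun y =>
        (pCL α k x * (z^α * Real.exp (-z)) / hCL α k)
          * (qCL α k y * (y^(α+1) * Real.exp (-y)) / (z+y)))
        (volume.restrict (Set.Ioi 0)) :=
      fun k _ => (intq hα k hz).const_mul _
    rw [integral_sub (integrable_finset_sum _ hint1) (integrable_finset_sum _ hint2),
      integral_finset_sum _ hint1, integral_finset_sum _ hint2, sub_eq_zero]
    apply Finset.sum_congr rfl
    intro k hk
    rw [integral_finset_sum _ (fun l _ => (intqPt hα k l).const_mul _),
      integral_const_mul _ _, L_q hα k hz]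
    have hterm : ∀ l ∈ Finset.range m,
        (∫ y in Set.Ioi (0:ℝ),
          (pCL α k x * (z^α * Real.exp (-z)) * Qt α l z / (hCL α k * hCL α l))
            * (qCL α k y * (y^(α+1) * Real.exp (-y)) * Pt α l y))
        = (pCL α k x * (z^α * Real.exp (-z)) * Qt α l z / (hCL α k * hCL α l)) * Bm α l k :=
      fun l _ => by rw [integral_const_mul _ _, L_mix1 hα k l]
    rw [Finset.sum_congr rfl hterm, Finset.sum_eq_single k]
    · rw [← L_h hα k]
      rcases eq_or_ne (hCL α k) 0 with h0 | h0
      · simp [h0]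
      · field_simp
    · intro l _ hlk
      rw [Bm_offdiag hα hlk, mul_zero]
    · intro hk'
      exact absurd hk hk'
  · intro y z hy hz
    have hptw : ∀ x ∈ Set.Ioi (0:ℝ), K00 α m x y * K11 α m x z
        = (∑ k ∈ Finset.range m, ∑ l ∈ Finset.range m,
            (qCL α k y * (z^(α+1) * Real.exp (-z)) * Pt α l z / (hCL α k * hCL α l))
              * (pCL α k x * (x^α * Real.exp (-x)) * Qt α l x))
          - ∑ k ∈ Finset.range m,
            (qCL α k y * (z^(α+1) * Real.exp (-z)) / hCL α k)
              * (pCL α k x * (x^α * Real.exp (-x)) / (z+x)) := by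
      intro x hx
      have hx0 : (0:ℝ) < x := hx
      rw [K11, L_D hα m hz hx0, Wcl,
        show Real.exp (-x-z) = Real.exp (-x) * Real.exp (-z) from by
          rw [show (-x-z:ℝ) = -x + -z from by ring, Real.exp_add],
        K00, Finset.sum_mul, ← Finset.sum_sub_distrib]
      apply Finset.sum_congr rfl
      intro k _
      rw [mul_sub]
      congr 1
      · rw [Finset.mul_sum, Finset.mul_sum]
        apply Finset.sum_congr rfl
        intro l _
        ring
      · ring
    rw [setIntegral_congr_fun measurableSet_Ioi hptw]
    have hint1 : ∀ k ∈ Finset.range m, Integrable (fun x => ∑ l ∈ Finset.range m,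
        (qCL α k y * (z^(α+1) * Real.exp (-z)) * Pt α l z / (hCL α k * hCL α l))
          * (pCL α k x * (x^α * Real.exp (-x)) * Qt α l x))
        (volume.restrict (Set.Ioi 0)) :=
      fun k _ => integrable_finset_sum _ (fun l _ => (intpQt hα k l).const_mul _)
    have hint2 : ∀ k ∈ Finset.range m, Integrable (fun x =>
        (qCL α k y * (z^(α+1) * Real.exp (-z)) / hCL α k)
          * (pCL α k x * (x^α * Real.exp (-x)) / (z+x)))
        (volume.restrict (Set.Ioi 0)) :=
      fun k _ => (intp hα k hz).const_mul _
    rw [integral_sub (integrable_finset_sum _ hint1) (integrable_finset_sum _ hint2),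
      integral_finset_sum _ hint1, integral_finset_sum _ hint2, sub_eq_zero]
    apply Finset.sum_congr rfl
    intro k hk
    rw [integral_finset_sum _ (fun l _ => (intpQt hα k l).const_mul _),
      integral_const_mul _ _, L_p hα k hz]
    have hterm : ∀ l ∈ Finset.range m,
        (∫ x in Set.Ioi (0:ℝ),
          (qCL α k y * (z^(α+1) * Real.exp (-z)) * Pt α l z / (hCL α k * hCL α l))
            * (pCL α k x * (x^α * Real.exp (-x)) * Qt α l x))
        = (qCL α k y * (z^(α+1) * Real.exp (-z)) * Pt α l z / (hCL α k * hCL α l)) * Bm α k l :=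
      fun l _ => by rw [integral_const_mul _ _, L_mix2 hα k l]
    rw [Finset.sum_congr rfl hterm, Finset.sum_eq_single k]
    · rw [← L_h hα k]
      rcases eq_or_ne (hCL α k) 0 with h0 | h0
      · simp [h0]
      · field_simp
    · intro l _ hlk
      rw [Bm_offdiag hα (Ne.symm hlk), mul_zero]
    · intro hk'
      exact absurd hk hk'
end
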